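/- arXiv:1102.2927 — 3 statements merged into one kernel-verified Lean document; each statement's English description precedes it below -/
import Mathlib

section
/- For every undirected graph H on a finite vertex set N and every pairwise disjoint triplet (A,B,C) of subsets of N belonging to M_H (i.e., C separates A from B in H), there exists a minimal triangulation H' of H such that (A,B,C) belongs to M_{H'}. -/
open scoped Classical BigOperators

variable {V : Type} [Fintype V] [DecidableEq V]

/-! ### Imsets -/

abbrev Imset (V : Type) := Finset V → ℤ

noncomputable def deltaIm (A : Finset V) : Imset V := fun B => if B = A then 1 else 0

noncomputable def semiElem (A B C : Finset V) : Imset V :=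
  deltaIm (A ∪ B ∪ C) + deltaIm C - deltaIm (A ∪ C) - deltaIm (B ∪ C)

def ElemValid (a b : V) (C : Finset V) : Prop := a ≠ b ∧ a ∉ C ∧ b ∉ C

noncomputable def elemOf (t : V × V × Finset V) : Imset V :=
  semiElem {t.1} {t.2.1} t.2.2

/-- A combinatorial imset: a nonnegative integer combination of elementary imsets. -/
def IsCombinatorial (u : Imset V) : Prop :=
  ∃ n : V × V × Finset V → ℕ,
    (∀ t, n t ≠ 0 → ElemValid t.1 t.2.1 t.2.2) ∧
    u = ∑ t : V × V × Finset V, (n t : ℤ) • elemOf t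

/-- A structural imset: an (integer-valued) element of the convex cone
generated by the elementary imsets. -/
def IsStructural (u : Imset V) : Prop :=
  ∃ c : V × V × Finset V → ℝ,
    (∀ t, 0 ≤ c t) ∧ (∀ t, c t ≠ 0 → ElemValid t.1 t.2.1 t.2.2) ∧
    ∀ A : Finset V, (u A : ℝ) = ∑ t : V × V × Finset V, c t * ((elemOf t) A : ℝ)

def DisjointTriple (A B C : Finset V) : Prop :=
  Disjoint A B ∧ Disjoint A C ∧ Disjoint B C

/-- The conditional independence statement induced by a (structural) imset. -/
def imsetCI (u : Imset V) (A B C : Finset V) : Prop :=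
  ∃ k : ℕ, IsStructural ((k : ℤ) • u - semiElem A B C)

/-! ### Undirected graph notions, relative to a vertex set `W` -/

def WalkIn (W : Finset V) {G : SimpleGraph V} {u v : V} (p : G.Walk u v) : Prop :=
  ∀ x ∈ p.support, x ∈ W

/-- `C` separates `A` from `B` in the subgraph of `G` induced on `W`. -/
def SeparatesIn (G : SimpleGraph V) (W A B C : Finset V) : Prop :=
  ∀ a ∈ A, ∀ b ∈ B, ∀ p : G.Walk a b, WalkIn W p → ∃ c ∈ C, c ∈ p.support

/-- The subgraph of `G` induced on `W` is chordal: every cycle of length ≥ 4 within `W`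
has a chord. -/
def ChordalIn (G : SimpleGraph V) (W : Finset V) : Prop :=
  ∀ (v : V) (p : G.Walk v v), p.IsCycle → WalkIn W p → 4 ≤ p.length →
    ∃ a b, a ∈ p.support ∧ b ∈ p.support ∧ G.Adj a b ∧ s(a, b) ∉ p.edges

def EdgesWithin (G : SimpleGraph V) (W : Finset V) : Prop :=
  ∀ a b, G.Adj a b → a ∈ W ∧ b ∈ W

/-- `G` is a triangulation of (the subgraph of) `H` (induced on `W`): a decomposable
(chordal) graph on the vertex set `W` containing all the edges of `H` within `W`. -/
def IsTriangulationIn (H : SimpleGraph V) (W : Finset V) (G : SimpleGraph V) : Prop :=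
  EdgesWithin G W ∧ (∀ a b, H.Adj a b → a ∈ W → b ∈ W → G.Adj a b) ∧ ChordalIn G W

/-- A minimal triangulation: no triangulation has a strictly smaller edge set. -/
def IsMinTriIn (H : SimpleGraph V) (W : Finset V) (G : SimpleGraph V) : Prop :=
  IsTriangulationIn H W G ∧ ∀ G', IsTriangulationIn H W G' → ¬ G' < G

/-- `𝔗(H_W)`, the set of minimal triangulations. -/
def minTris (H : SimpleGraph V) (W : Finset V) : Set (SimpleGraph V) :=
  {G | IsMinTriIn H W G}

/-- The induced subgraph on `W`, kept as a graph on the ambient vertex type. -/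
def inducedSG (G : SimpleGraph V) (W : Finset V) : SimpleGraph V where
  Adj a b := G.Adj a b ∧ a ∈ W ∧ b ∈ W
  symm := ⟨fun a b h => ⟨h.1.symm, h.2.2, h.2.1⟩⟩
  loopless := ⟨fun a h => G.loopless.irrefl a h.1⟩

/-- Maximal cliques of the subgraph induced on `W`. -/
def IsMaxCliqueIn (G : SimpleGraph V) (W K : Finset V) : Prop :=
  K ⊆ W ∧ G.IsClique (K : Set V) ∧
    ∀ K' : Finset V, K' ⊆ W → G.IsClique (K' : Set V) → K ⊆ K' → K = K'

def ReachIn (G : SimpleGraph V) (W : Finset V) (u v : V) : Prop :=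
  ∃ p : G.Walk u v, WalkIn W p

/-- `S` is a `(u,v)`-separator in the subgraph induced on `W`. -/
def SepPairIn (G : SimpleGraph V) (W S : Finset V) (u v : V) : Prop :=
  u ∈ W ∧ v ∈ W ∧ u ∉ S ∧ v ∉ S ∧
    ∀ p : G.Walk u v, WalkIn W p → ∃ s ∈ S, s ∈ p.support

/-- A clique separator of the subgraph induced on `W`. -/
def IsCliqueSepIn (G : SimpleGraph V) (W S : Finset V) : Prop :=
  S ⊆ W ∧ G.IsClique (S : Set V) ∧ ∃ u v, ReachIn G W u v ∧ SepPairIn G W S u v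

/-- The subgraph induced on `W` is prime: it has no clique separator. -/
def IsPrimeIn (G : SimpleGraph V) (W : Finset V) : Prop :=
  ¬ ∃ S, IsCliqueSepIn G W S

/-- `U` is a maximal prime component of the subgraph induced on `W`. -/
def IsMpCompIn (G : SimpleGraph V) (W U : Finset V) : Prop :=
  U ⊆ W ∧ IsPrimeIn G U ∧ ∀ U', U' ⊆ W → IsPrimeIn G U' → U ⊆ U' → U = U'

/-- `S` is a minimal vertex separator of the subgraph induced on `W`. -/
def IsMinVtxSepIn (G : SimpleGraph V) (W S : Finset V) : Prop :=
  S ⊆ W ∧ ∃ u v, SepPairIn G W S u v ∧ ∀ S', S' ⊂ S → ¬ SepPairIn G W S' u v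

/-- The set of clique minimal vertex separators of the subgraph induced on `W`. -/
def cmvs (G : SimpleGraph V) (W : Finset V) : Set (Finset V) :=
  {S | G.IsClique (S : Set V) ∧ IsMinVtxSepIn G W S}

/-! ### Running intersection orderings and standard imsets -/

def unionTake (l : List (Finset V)) (i : ℕ) : Finset V :=
  (l.take i).foldr (· ∪ ·) ∅

def sepAt (l : List (Finset V)) (i : ℕ) : Finset V :=
  l.getD i ∅ ∩ unionTake l i

/-- `l` is an ordering, with the running intersection property, of the family `F`. -/
def IsRIPList (F : Finset V → Prop) (l : List (Finset V)) : Prop :=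
  l.Nodup ∧ (∀ X, X ∈ l ↔ F X) ∧
    ∀ i, 0 < i → i < l.length → ∃ k, k < i ∧ sepAt l i ⊆ l.getD k ∅

noncomputable def ripList (F : Finset V → Prop) : List (Finset V) :=
  if h : ∃ l, IsRIPList F l then h.choose else []

/-- The multiplicity `ν(S)`: the number of indices `i ≥ 1` with `S_i = S` in a
running intersection ordering of the family `F`. -/
noncomputable def nuOf (F : Finset V → Prop) (S : Finset V) : ℕ :=
  (List.range (ripList F).length).countP
    (fun i => decide (0 < i ∧ sepAt (ripList F) i = S))

/-- The standard imset of a decomposable graph (induced on `W`),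
`u_G = δ_W − Σ_{K ∈ K_G} δ_K + Σ_{S ∈ S_G} ν_G(S)·δ_S`. -/
noncomputable def uDec (G : SimpleGraph V) (W : Finset V) : Imset V :=
  deltaIm W - (∑ᶠ K ∈ {K : Finset V | IsMaxCliqueIn G W K}, deltaIm K)
    + ∑ᶠ S ∈ cmvs G W, (nuOf (IsMaxCliqueIn G W) S : ℤ) • deltaIm S

/-- The standard imset of a general undirected graph (induced on `W`). -/
noncomputable def uUG (G : SimpleGraph V) (W : Finset V) : Imset V :=
  deltaIm W - (∑ᶠ U ∈ {U : Finset V | IsMpCompIn G W U}, deltaIm U)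
    + (∑ᶠ S ∈ cmvs G W, (nuOf (IsMpCompIn G W) S : ℤ) • deltaIm S)
    + ∑ᶠ U ∈ {U : Finset V | IsMpCompIn G W U},
        ∑ᶠ G' ∈ minTris (inducedSG G U) U, uDec G' U

/-! ### Chain graphs -/

/-- A mixed graph: `Adj a b ∧ Adj b a` is an undirected edge `a — b`,
`Adj a b ∧ ¬ Adj b a` is a directed edge `a → b`. -/
structure MixedGraph (V : Type) where
  Adj : V → V → Prop
  irrefl : ∀ a, ¬ Adj a a

def MixedGraph.UndirEdge (G : MixedGraph V) (a b : V) : Prop := G.Adj a b ∧ G.Adj b a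

def MixedGraph.DirEdge (G : MixedGraph V) (a b : V) : Prop := G.Adj a b ∧ ¬ G.Adj b a

/-- A chain graph: no directed cycles (no cycle containing a directed edge). -/
def IsChainGraph (G : MixedGraph V) : Prop :=
  ∀ a b, G.DirEdge a b → ¬ Relation.ReflTransGen G.Adj b a

/-- The underlying (undirected) graph of a mixed graph. -/
def MixedGraph.underlying (G : MixedGraph V) : SimpleGraph V where
  Adj a b := a ≠ b ∧ (G.Adj a b ∨ G.Adj b a)
  symm := by
    constructor
    intro a b h
    exact ⟨h.1.symm, h.2.symm⟩
  loopless := ⟨fun a h => h.1 rfl⟩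

/-- The undirected part of a mixed graph. -/
def MixedGraph.ugPart (G : MixedGraph V) : SimpleGraph V where
  Adj a b := G.Adj a b ∧ G.Adj b a
  symm := ⟨fun a b h => ⟨h.2, h.1⟩⟩
  loopless := ⟨fun a h => G.irrefl a h.1⟩

/-- The chain component containing `v` : the connectivity component of `v`
after removing all directed edges. -/
noncomputable def chainComp (G : MixedGraph V) (v : V) : Finset V :=
  Finset.univ.filter fun u => (MixedGraph.ugPart G).Reachable v u

/-- The set of chain components. -/
noncomputable def chainComps (G : MixedGraph V) : Finset (Finset V) :=
  Finset.univ.image (chainComp G)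

/-- The parent set of `C`: vertices outside `C` with a directed edge into `C`. -/
noncomputable def paSet (G : MixedGraph V) (C : Finset V) : Finset V :=
  Finset.univ.filter fun a => a ∉ C ∧ ∃ b ∈ C, G.DirEdge a b

/-- The ancestral set of `K`. -/
noncomputable def anSet (G : MixedGraph V) (K : Finset V) : Finset V :=
  Finset.univ.filter fun a => ∃ k ∈ K, Relation.ReflTransGen G.Adj a k

/-- The induced sub-mixed-graph on `W` (on the ambient vertex type). -/
def inducedM (G : MixedGraph V) (W : Finset V) : MixedGraph V where
  Adj a b := G.Adj a b ∧ a ∈ W ∧ b ∈ W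
  irrefl := fun a h => G.irrefl a h.1

/-- The moral graph: the underlying graph together with edges joining any two
vertices that are parents of a common chain component. -/
noncomputable def moralG (G : MixedGraph V) : SimpleGraph V where
  Adj a b := a ≠ b ∧
    (G.Adj a b ∨ G.Adj b a ∨ ∃ C ∈ chainComps G, a ∈ paSet G C ∧ b ∈ paSet G C)
  symm := by
    constructor
    intro a b h
    refine ⟨h.1.symm, ?_⟩
    rcases h.2 with h' | h' | ⟨C, hC, ha, hb⟩
    · exact Or.inr (Or.inl h')
    · exact Or.inl h'
    · exact Or.inr (Or.inr ⟨C, hC, hb, ha⟩)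
  loopless := ⟨fun a h => h.1 rfl⟩

/-- The closure graph `clo_H(C) = (H_{C ∪ pa(C)})^mor`. -/
noncomputable def clo (G : MixedGraph V) (C : Finset V) : SimpleGraph V :=
  moralG (inducedM G (C ∪ paSet G C))

/-- The separation criterion for chain graphs:
`C` separates `A` from `B` in `(H_{an(A∪B∪C)})^mor`. -/
noncomputable def cgCI (G : MixedGraph V) (A B C : Finset V) : Prop :=
  SeparatesIn (moralG (inducedM G (anSet G (A ∪ B ∪ C)))) Finset.univ A B C

/-- Two mixed graphs are (Markov) equivalent if they induce the same independence model. -/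
noncomputable def CGEquiv (G H : MixedGraph V) : Prop :=
  ∀ A B C : Finset V, DisjointTriple A B C → (cgCI G A B C ↔ cgCI H A B C)

/-- A directed acyclic graph: all edges directed, no directed cycles. -/
def IsDAG (G : MixedGraph V) : Prop :=
  (∀ a b, G.Adj a b → ¬ G.Adj b a) ∧ IsChainGraph G

/-- A triangulation of a chain graph `H`: a chain graph containing every undirected and
every directed edge of `H` which is equivalent to some directed acyclic graph. -/
noncomputable def IsCGTri (H G : MixedGraph V) : Prop :=
  IsChainGraph G ∧
  (∀ a b, H.UndirEdge a b → G.UndirEdge a b) ∧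
  (∀ a b, H.DirEdge a b → G.DirEdge a b) ∧
  ∃ D : MixedGraph V, IsDAG D ∧ CGEquiv G D

def mEdges (G : MixedGraph V) : Set (V × V) := {p | G.Adj p.1 p.2}

/-- A minimal triangulation of the chain graph `H`: no triangulation of `H`
has a strictly smaller edge set. -/
noncomputable def IsCGMinTri (H G : MixedGraph V) : Prop :=
  IsCGTri H G ∧ ∀ G', IsCGTri H G' → ¬ mEdges G' ⊂ mEdges G

/-- The standard imset of a chain graph. -/
noncomputable def uCG (H : MixedGraph V) : Imset V :=
  deltaIm Finset.univ - deltaIm ∅ +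
    ∑ C ∈ chainComps H,
      (deltaIm (paSet H C) - deltaIm (C ∪ paSet H C) + uUG (clo H C) (C ∪ paSet H C))

/-- `U ⇒ L` is a meta-arrow. -/
def MetaArrow (H : MixedGraph V) (U L : Finset V) : Prop :=
  U ∈ chainComps H ∧ L ∈ chainComps H ∧ U ≠ L ∧ ∃ a ∈ U, ∃ b ∈ L, H.DirEdge a b

/-- The graph obtained by merging the meta-arrow `U ⇒ L`: every directed edge from `U`
to `L` is replaced by an undirected edge. -/
def mergeGraph (H : MixedGraph V) (U L : Finset V) : MixedGraph V where
  Adj x y := H.Adj x y ∨ (H.DirEdge y x ∧ y ∈ U ∧ x ∈ L)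
  irrefl := fun a h => by
    rcases h with h | ⟨⟨h, _⟩, _⟩ <;> exact H.irrefl a h

/-- Feasibility of merging the meta-arrow `U ⇒ L`. -/
def FeasibleMerge (H : MixedGraph V) (U L : Finset V) : Prop :=
  MetaArrow H U L ∧
  (MixedGraph.underlying H).IsClique ((paSet H L ∩ U : Finset V) : Set V) ∧
  ∀ b ∈ paSet H L ∩ U, paSet H L \ U ⊆ paSet H ({b} : Finset V)

/-! ### Auxiliary machinery for Statement 0 -/

/-- Two cliques glued along their intersection. -/
private def twoClique (P Q : Set V) : SimpleGraph V where
  Adj a b := a ≠ b ∧ ((a ∈ P ∧ b ∈ P) ∨ (a ∈ Q ∧ b ∈ Q))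
  symm := ⟨by rintro a b ⟨h, h'⟩; exact ⟨h.symm, by tauto⟩⟩
  loopless := ⟨fun a h => h.1 rfl⟩

private lemma twoClique_stay {P Q : Set V} : ∀ {u w : V}
    (p : (twoClique P Q).Walk u w), u ∈ P → u ∉ Q →
    (∀ z ∈ p.support, ¬(z ∈ P ∧ z ∈ Q)) → w ∈ P ∧ w ∉ Q
  | _, _, SimpleGraph.Walk.nil, hu, huQ, _ => ⟨hu, huQ⟩
  | u, w, @SimpleGraph.Walk.cons _ _ _ b _ h' q, hu, huQ, h => by
    have hbsupp : b ∈ (SimpleGraph.Walk.cons h' q).support := by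
      rw [SimpleGraph.Walk.support_cons]
      exact List.mem_cons_of_mem _ q.start_mem_support
    obtain ⟨hne, hor⟩ := (show u ≠ b ∧ ((u ∈ P ∧ b ∈ P) ∨ (u ∈ Q ∧ b ∈ Q)) from h')
    rcases hor with ⟨h1, h2⟩ | ⟨h1, h2⟩
    · have hy : ¬(b ∈ P ∧ b ∈ Q) := h b hbsupp
      refine twoClique_stay q h2 (fun hq => hy ⟨h2, hq⟩) (fun z hz => h z ?_)
      rw [SimpleGraph.Walk.support_cons]
      exact List.mem_cons_of_mem _ hz
    · exact absurd h1 huQ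

private lemma closed_mem_tail {G : SimpleGraph V} {w z : V} (r : G.Walk w w)
    (hr : r ≠ SimpleGraph.Walk.nil) : z ∈ r.support ↔ z ∈ r.support.tail := by
  cases r with
  | nil => exact absurd rfl hr
  | cons h q =>
    simp only [SimpleGraph.Walk.support_cons, List.tail_cons, List.mem_cons]
    constructor
    · rintro (rfl | hz)
      · exact q.end_mem_support
      · exact hz
    · exact fun hz => Or.inr hz

private lemma cycle_support_card {G : SimpleGraph V} {v : V} {p : G.Walk v v}
    (hc : p.IsCycle) : p.support.toFinset.card = p.length := by
  cases p with
  | nil => exact absurd rfl hc.ne_nil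
  | cons h q =>
    have hnd : (SimpleGraph.Walk.cons h q).support.tail.Nodup := hc.support_nodup
    simp only [SimpleGraph.Walk.support_cons, List.tail_cons] at hnd ⊢
    rw [List.toFinset_cons,
      Finset.insert_eq_self.mpr (List.mem_toFinset.mpr q.end_mem_support),
      List.toFinset_card_of_nodup hnd, SimpleGraph.Walk.length_support,
      SimpleGraph.Walk.length_cons]

private lemma twoClique_cross {P Q : Set V} {v : V} (p : (twoClique P Q).Walk v v)
    (hcyc : p.IsCycle) {x y : V} (hx : x ∈ p.support) (hxP : x ∈ P) (hxQ : x ∉ Q)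
    (hy : y ∈ p.support) (hyQ : y ∈ Q) (hyP : y ∉ P) :
    ∃ c1 c2 : V, c1 ≠ c2 ∧ c1 ∈ p.support ∧ c2 ∈ p.support ∧
      (c1 ∈ P ∧ c1 ∈ Q) ∧ (c2 ∈ P ∧ c2 ∈ Q) := by
  classical
  set q := p.rotate x hx with hqdef
  have hqc : q.IsCycle := hcyc.rotate hx
  have hmem : ∀ z, z ∈ q.support ↔ z ∈ p.support := by
    intro z
    rw [closed_mem_tail q hqc.ne_nil, closed_mem_tail p hcyc.ne_nil]
    exact (SimpleGraph.Walk.support_rotate p x hx).perm.mem_iff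
  have hyq : y ∈ q.support := (hmem y).mpr hy
  set q1 := q.takeUntil y hyq with hq1def
  set q2 := q.dropUntil y hyq with hq2def
  have hspec : q1.append q2 = q := SimpleGraph.Walk.take_spec q hyq
  have hc1 : ∃ c ∈ q1.support, c ∈ P ∧ c ∈ Q := by
    by_contra hcon
    exact hyP (twoClique_stay q1 hxP hxQ (fun z hz hzz => hcon ⟨z, hz, hzz⟩)).1
  have hc2 : ∃ c ∈ q2.support, c ∈ P ∧ c ∈ Q := by
    by_contra hcon
    refine hyP (twoClique_stay q2.reverse hxP hxQ (fun z hz hzz => ?_)).1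
    rw [SimpleGraph.Walk.support_reverse, List.mem_reverse] at hz
    exact hcon ⟨z, hz, hzz⟩
  obtain ⟨c1, hc1s, hc1PQ⟩ := hc1
  obtain ⟨c2, hc2s, hc2PQ⟩ := hc2
  have hc1x : c1 ≠ x := fun h => hxQ (h ▸ hc1PQ.2)
  have hc2y : c2 ≠ y := fun h => hyP (h ▸ hc2PQ.1)
  have hc1tail : c1 ∈ q1.support.tail := by
    have := (SimpleGraph.Walk.support_eq_cons q1) ▸ hc1s
    rcases List.mem_cons.mp this with h | h
    · exact absurd h hc1x
    · exact h
  have hc2tail : c2 ∈ q2.support.tail := by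
    have := (SimpleGraph.Walk.support_eq_cons q2) ▸ hc2s
    rcases List.mem_cons.mp this with h | h
    · exact absurd h hc2y
    · exact h
  have happ : q.support.tail = q1.support.tail ++ q2.support.tail := by
    have h1 : q.support = q1.support ++ q2.support.tail := by
      conv_lhs => rw [← hspec]
      exact SimpleGraph.Walk.support_append q1 q2
    rw [h1, SimpleGraph.Walk.support_eq_cons q1]
    simp
  have hnd : q.support.tail.Nodup := hqc.support_nodup
  rw [happ] at hnd
  have hne : c1 ≠ c2 := fun h =>
    (List.disjoint_of_nodup_append hnd) hc1tail (h ▸ hc2tail)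
  exact ⟨c1, c2, hne,
    (hmem c1).mp (SimpleGraph.Walk.support_takeUntil_subset q hyq hc1s),
    (hmem c2).mp (SimpleGraph.Walk.support_dropUntil_subset q hyq hc2s),
    hc1PQ, hc2PQ⟩

private def pairFin : Sym2 V → Finset V :=
  Sym2.lift ⟨fun a b => {a, b}, fun a b => Finset.pair_comm a b⟩

private lemma two_mul_choose_two (k : ℕ) : 2 * k.choose 2 = k * (k - 1) := by
  induction k with
  | zero => simp
  | succ m ih =>
    rw [show (2 : ℕ) = 1 + 1 from rfl, Nat.choose_succ_succ, Nat.mul_add,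
      show (1 + 1 : ℕ) = 2 from rfl, ih, Nat.choose_one_right, Nat.succ_sub_one]
    cases m with
    | zero => simp
    | succ s =>
      rw [Nat.succ_sub_one]
      ring

private lemma chord_arith (a b c n : ℕ) (hn : 4 ≤ n) (hsum : n + c = a + b)
    (hle : a.choose 2 + b.choose 2 ≤ n + c.choose 2)
    (hcase : b = c ∨ a = c ∨ (2 ≤ c ∧ c < a ∧ c < b)) : False := by
  have hle2 : a * (a - 1) + b * (b - 1) ≤ 2 * n + c * (c - 1) := by
    have h := Nat.mul_le_mul_left 2 hle
    rw [Nat.mul_add, Nat.mul_add, two_mul_choose_two, two_mul_choose_two,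
      two_mul_choose_two] at h
    exact h
  rcases hcase with rfl | rfl | ⟨h2, h3, h4⟩
  · -- c = b, so n = a
    have hna : n = a := by omega
    obtain ⟨d, rfl⟩ : ∃ d, a = d + 4 := ⟨a - 4, by omega⟩
    rw [show d + 4 - 1 = d + 3 by omega] at hle2
    subst hna
    nlinarith [hle2]
  · -- c = a, so n = b
    have hnb : n = b := by omega
    obtain ⟨d, rfl⟩ : ∃ d, b = d + 4 := ⟨b - 4, by omega⟩
    rw [show d + 4 - 1 = d + 3 by omega] at hle2
    subst hnb
    nlinarith [hle2]
  · obtain ⟨z, rfl⟩ : ∃ z, c = z + 2 := ⟨c - 2, by omega⟩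
    obtain ⟨x, rfl⟩ : ∃ x, a = z + 3 + x := ⟨a - (z + 3), by omega⟩
    obtain ⟨y, rfl⟩ : ∃ y, b = z + 3 + y := ⟨b - (z + 3), by omega⟩
    have hn2 : n = z + 4 + x + y := by omega
    subst hn2
    rw [show z + 3 + x - 1 = z + 2 + x by omega, show z + 3 + y - 1 = z + 2 + y by omega,
      show z + 2 - 1 = z + 1 by omega] at hle2
    nlinarith [hle2]

private lemma twoClique_chordalIn {P Q : Set V} (hPQ : ∀ z : V, z ∈ P ∨ z ∈ Q) :
    ChordalIn (twoClique P Q) Finset.univ := by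
  classical
  intro v p hcyc _ hlen
  by_contra hno
  push_neg at hno
  set s : Finset V := p.support.toFinset with hs
  set sP : Finset V := s.filter (· ∈ P) with hsP
  set sQ : Finset V := s.filter (· ∈ Q) with hsQ
  set sC : Finset V := s.filter (fun z => z ∈ P ∧ z ∈ Q) with hsC
  have hsPQ_union : sP ∪ sQ = s := by
    ext z
    simp only [hsP, hsQ, Finset.mem_union, Finset.mem_filter]
    constructor
    · rintro (⟨h, _⟩ | ⟨h, _⟩) <;> exact h
    · intro h; rcases hPQ z with h' | h'
      · exact Or.inl ⟨h, h'⟩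
      · exact Or.inr ⟨h, h'⟩
  have hsPQ_inter : sP ∩ sQ = sC := by
    ext z
    simp only [hsP, hsQ, hsC, Finset.mem_inter, Finset.mem_filter]
    tauto
  have hcard_s : s.card = p.length := cycle_support_card hcyc
  have hedges : p.edges.toFinset.card = p.length := by
    rw [List.toFinset_card_of_nodup hcyc.isCircuit.isTrail.edges_nodup,
      SimpleGraph.Walk.length_edges]
  set T : Finset (Finset V) := Finset.powersetCard 2 sP ∪ Finset.powersetCard 2 sQ with hT
  have hTsub : T ⊆ p.edges.toFinset.image pairFin := by
    intro t ht
    have h2 : t.card = 2 ∧ (t ⊆ sP ∨ t ⊆ sQ) := by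
      rcases Finset.mem_union.mp ht with h | h
      · exact ⟨(Finset.mem_powersetCard.mp h).2, Or.inl (Finset.mem_powersetCard.mp h).1⟩
      · exact ⟨(Finset.mem_powersetCard.mp h).2, Or.inr (Finset.mem_powersetCard.mp h).1⟩
    obtain ⟨a, b, hab, rfl⟩ := Finset.card_eq_two.mp h2.1
    have hamem : a ∈ ({a, b} : Finset V) := by simp
    have hbmem : b ∈ ({a, b} : Finset V) := by simp
    have ha : a ∈ s := by
      rcases h2.2 with h | h <;> exact (Finset.mem_filter.mp (h hamem)).1
    have hb : b ∈ s := by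
      rcases h2.2 with h | h <;> exact (Finset.mem_filter.mp (h hbmem)).1
    have hadj : (twoClique P Q).Adj a b := by
      change a ≠ b ∧ ((a ∈ P ∧ b ∈ P) ∨ (a ∈ Q ∧ b ∈ Q))
      refine ⟨hab, ?_⟩
      rcases h2.2 with h | h
      · exact Or.inl ⟨(Finset.mem_filter.mp (h hamem)).2, (Finset.mem_filter.mp (h hbmem)).2⟩
      · exact Or.inr ⟨(Finset.mem_filter.mp (h hamem)).2, (Finset.mem_filter.mp (h hbmem)).2⟩
    have he : s(a, b) ∈ p.edges :=
      hno a b (List.mem_toFinset.mp ha) (List.mem_toFinset.mp hb) hadj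
    exact Finset.mem_image.mpr ⟨s(a, b), List.mem_toFinset.mpr he, rfl⟩
  have hTcard : T.card ≤ p.length := by
    calc T.card ≤ (p.edges.toFinset.image pairFin).card := Finset.card_le_card hTsub
    _ ≤ p.edges.toFinset.card := Finset.card_image_le
    _ = p.length := hedges
  have hTinter : Finset.powersetCard 2 sP ∩ Finset.powersetCard 2 sQ
      = Finset.powersetCard 2 sC := by
    ext t
    simp only [Finset.mem_inter, Finset.mem_powersetCard, ← hsPQ_inter,
      Finset.subset_inter_iff]
    tauto
  have hcount : T.card + sC.card.choose 2 = sP.card.choose 2 + sQ.card.choose 2 := by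
    have h := Finset.card_union_add_card_inter (Finset.powersetCard 2 sP)
      (Finset.powersetCard 2 sQ)
    rw [hTinter, Finset.card_powersetCard, Finset.card_powersetCard,
      Finset.card_powersetCard] at h
    exact h
  have hle : sP.card.choose 2 + sQ.card.choose 2 ≤ p.length + sC.card.choose 2 := by
    rw [← hcount]
    exact Nat.add_le_add_right hTcard _
  have hsum : p.length + sC.card = sP.card + sQ.card := by
    have h := Finset.card_union_add_card_inter sP sQ
    rw [hsPQ_union, hsPQ_inter, hcard_s] at h
    exact h
  have hcases : sQ.card = sC.card ∨ sP.card = sC.card ∨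
      (2 ≤ sC.card ∧ sC.card < sP.card ∧ sC.card < sQ.card) := by
    by_cases hallP : ∀ z ∈ s, z ∈ P
    · left
      congr 1
      ext z
      simp only [hsQ, hsC, Finset.mem_filter]
      exact ⟨fun ⟨h1, h2⟩ => ⟨h1, hallP z h1, h2⟩, fun ⟨h1, _, h3⟩ => ⟨h1, h3⟩⟩
    · by_cases hallQ : ∀ z ∈ s, z ∈ Q
      · right; left
        congr 1
        ext z
        simp only [hsP, hsC, Finset.mem_filter]
        exact ⟨fun ⟨h1, h2⟩ => ⟨h1, h2, hallQ z h1⟩, fun ⟨h1, h3, _⟩ => ⟨h1, h3⟩⟩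
      · right; right
        push_neg at hallP hallQ
        obtain ⟨y0, hy0s, hy0P⟩ := hallP
        obtain ⟨x0, hx0s, hx0Q⟩ := hallQ
        have hx0P : x0 ∈ P := (hPQ x0).resolve_right hx0Q
        have hy0Q : y0 ∈ Q := (hPQ y0).resolve_left hy0P
        obtain ⟨c1, c2, hne, hc1, hc2, hc1PQ, hc2PQ⟩ :=
          twoClique_cross p hcyc (List.mem_toFinset.mp hx0s) hx0P hx0Q
            (List.mem_toFinset.mp hy0s) hy0Q hy0P
        refine ⟨?_, ?_, ?_⟩
        · exact Finset.one_lt_card.mpr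
            ⟨c1, Finset.mem_filter.mpr ⟨List.mem_toFinset.mpr hc1, hc1PQ⟩,
             c2, Finset.mem_filter.mpr ⟨List.mem_toFinset.mpr hc2, hc2PQ⟩, hne⟩
        · refine Finset.card_lt_card ?_
          rw [Finset.ssubset_iff_of_subset
            (fun z hz => Finset.mem_filter.mpr
              ⟨(Finset.mem_filter.mp hz).1, (Finset.mem_filter.mp hz).2.1⟩)]
          exact ⟨x0, Finset.mem_filter.mpr ⟨hx0s, hx0P⟩,
            fun hcon => hx0Q (Finset.mem_filter.mp hcon).2.2⟩
        · refine Finset.card_lt_card ?_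
          rw [Finset.ssubset_iff_of_subset
            (fun z hz => Finset.mem_filter.mpr
              ⟨(Finset.mem_filter.mp hz).1, (Finset.mem_filter.mp hz).2.2⟩)]
          exact ⟨y0, Finset.mem_filter.mpr ⟨hy0s, hy0Q⟩,
            fun hcon => hy0P (Finset.mem_filter.mp hcon).2.1⟩
  exact chord_arith sP.card sQ.card sC.card p.length hlen hsum hle hcases

/-- For every undirected graph `H` and every pairwise disjoint triplet
`(A,B,C)` belonging to `M_H`, there is a minimal triangulation `H'` of `H`
with `(A,B,C) ∈ M_{H'}`. -/
theorem exists_minimal_triangulation_separating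
    {V : Type} [Fintype V] [DecidableEq V] (H : SimpleGraph V) (A B C : Finset V)
    (hABC : DisjointTriple A B C)
    (hsep : SeparatesIn H Finset.univ A B C) :
    ∃ H' : SimpleGraph V, IsMinTriIn H Finset.univ H' ∧
      SeparatesIn H' Finset.univ A B C := by
    classical
  set X : Set V := {x | ∃ a ∈ A, ∃ p : H.Walk a x, ∀ y ∈ p.support, y ∉ C} with hXdef
  set P : Set V := X ∪ ↑C with hPdef
  set Q : Set V := Xᶜ ∪ ↑C with hQdef
  have hXC : ∀ x ∈ X, x ∉ C := by
    rintro x ⟨a, ha, p, hp⟩ hxC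
    exact hp x p.end_mem_support hxC
  have hPQ : ∀ z : V, z ∈ P ∨ z ∈ Q := by
    intro z
    by_cases hz : z ∈ X
    · exact Or.inl (Or.inl hz)
    · exact Or.inr (Or.inl hz)
  have hPQC : ∀ z : V, z ∈ P → z ∈ Q → z ∈ C := by
    rintro z (hzX | hzC) (hzX' | hzC')
    · exact absurd hzX hzX'
    · exact hzC'
    · exact hzC
    · exact hzC
  have hXclosed : ∀ u b, u ∈ X → H.Adj u b → b ∉ C → b ∈ X := by
    rintro u b ⟨a, ha, p, hp⟩ hadj hbC
    refine ⟨a, ha, p.concat hadj, ?_⟩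
    intro y hy
    rw [SimpleGraph.Walk.support_concat] at hy
    rcases List.mem_append.mp hy with hy | hy
    · exact hp y hy
    · rw [List.mem_singleton] at hy
      exact hy ▸ hbC
  have hHle : H ≤ twoClique P Q := by
    intro a b hadj
    change a ≠ b ∧ ((a ∈ P ∧ b ∈ P) ∨ (a ∈ Q ∧ b ∈ Q))
    refine ⟨hadj.ne, ?_⟩
    by_cases haX : a ∈ X
    · by_cases hbC : b ∈ C
      · exact Or.inl ⟨Or.inl haX, Or.inr hbC⟩
      · exact Or.inl ⟨Or.inl haX, Or.inl (hXclosed a b haX hadj hbC)⟩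
    · by_cases haC : a ∈ C
      · by_cases hbX : b ∈ X
        · exact Or.inl ⟨Or.inr haC, Or.inl hbX⟩
        · exact Or.inr ⟨Or.inr haC, Or.inl hbX⟩
      · have hbXc : b ∉ X ∨ b ∈ C := by
          by_cases hbC : b ∈ C
          · exact Or.inr hbC
          · exact Or.inl fun hbX => haX (hXclosed b a hbX hadj.symm haC)
        rcases hbXc with h | h
        · exact Or.inr ⟨Or.inl haX, Or.inl h⟩
        · exact Or.inr ⟨Or.inl haX, Or.inr h⟩
  have hAX : ∀ a ∈ A, a ∈ X := by
    intro a ha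
    refine ⟨a, ha, SimpleGraph.Walk.nil, ?_⟩
    intro y hy
    rw [SimpleGraph.Walk.support_nil, List.mem_singleton] at hy
    subst hy
    exact fun hc => Finset.disjoint_left.mp hABC.2.1 ha hc
  have hBX : ∀ b ∈ B, b ∉ X := by
    rintro b hb ⟨a, ha, p, hp⟩
    obtain ⟨c, hc, hcs⟩ := hsep a ha b hb p (fun x _ => Finset.mem_univ x)
    exact hp c hcs hc
  have hsepG1 : SeparatesIn (twoClique P Q) Finset.univ A B C := by
    intro a ha b hb p _
    by_contra hcon
    have haX : a ∈ X := hAX a ha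
    have hstay := twoClique_stay p (Or.inl haX : a ∈ P) ?_ ?_
    · have hbC : b ∉ C := fun hc =>
        Finset.disjoint_left.mp hABC.2.2 hb hc
      rcases hstay.1 with hbX | hbC'
      · exact hBX b hb hbX
      · exact hbC hbC'
    · rintro (haXc | haC)
      · exact haXc haX
      · exact hXC a haX haC
    · intro z hz hzPQ
      exact hcon ⟨z, hPQC z hzPQ.1 hzPQ.2, hz⟩
  have hTri : IsTriangulationIn H Finset.univ (twoClique P Q) :=
    ⟨fun a b _ => ⟨Finset.mem_univ a, Finset.mem_univ b⟩,
     fun a b h _ _ => hHle h, twoClique_chordalIn hPQ⟩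
  obtain ⟨G', hG'mem, hG'min⟩ := (wellFounded_lt (α := SimpleGraph V)).has_min
    {G | IsTriangulationIn H Finset.univ G ∧ G ≤ twoClique P Q} ⟨twoClique P Q, hTri, le_rfl⟩
  refine ⟨G', ⟨hG'mem.1, fun G'' hG'' hlt => hG'min G'' ⟨hG'', hlt.le.trans hG'mem.2⟩ hlt⟩, ?_⟩
  intro a ha b hb p _
  have hsupp : (p.mapLe hG'mem.2).support = p.support := by
    show (p.map (SimpleGraph.Hom.ofLE hG'mem.2)).support = p.support
    rw [SimpleGraph.Walk.support_map]
    exact List.map_id p.support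
  obtain ⟨c, hc, hcs⟩ := hsepG1 a ha b hb (p.mapLe hG'mem.2) (fun x _ => Finset.mem_univ x)
  exact ⟨c, hc, by rwa [hsupp] at hcs⟩
end

section
/- Let H be an undirected graph on a finite vertex set N, and let H' be a graph on N with E(H) ⊆ E(H') such that every edge of E(H') ∖ E(H) joins two vertices lying in a common mp-component of H, and for each mp-component V of H the induced subgraph H'_V is a minimal triangulation of H_V. Then H' is a minimal triangulation of H. -/
open scoped Classical BigOperators

variable {V : Type} [Fintype V] [DecidableEq V]

section AuxProof
open SimpleGraph

/-- A walk in `H` avoiding `S`. -/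
def RAvoid (H : SimpleGraph V) (S : Finset V) (u v : V) : Prop :=
  ∃ p : H.Walk u v, ∀ x ∈ p.support, x ∉ S

/-- A walk in `H` within `P` avoiding `S`. -/
def GWalk (H : SimpleGraph V) (P S : Finset V) (u v : V) : Prop :=
  ∃ p : H.Walk u v, WalkIn P p ∧ ∀ x ∈ p.support, x ∉ S

lemma reachIn_symm {H : SimpleGraph V} {P : Finset V} {u v : V}
    (h : ReachIn H P u v) : ReachIn H P v u := by
  obtain ⟨p, hp⟩ := h
  exact ⟨p.reverse, fun x hx => hp x (by simpa [SimpleGraph.Walk.support_reverse] using hx)⟩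

lemma reachIn_trans {H : SimpleGraph V} {P : Finset V} {u v w : V}
    (h1 : ReachIn H P u v) (h2 : ReachIn H P v w) : ReachIn H P u w := by
  obtain ⟨p, hp⟩ := h1; obtain ⟨q, hq⟩ := h2
  refine ⟨p.append q, fun x hx => ?_⟩
  rcases (SimpleGraph.Walk.mem_support_append_iff p q).mp hx with h | h
  exacts [hp x h, hq x h]

lemma rAvoid_symm {H : SimpleGraph V} {S : Finset V} {u v : V}
    (h : RAvoid H S u v) : RAvoid H S v u := by
  obtain ⟨p, hp⟩ := h
  exact ⟨p.reverse, fun x hx => hp x (by simpa [SimpleGraph.Walk.support_reverse] using hx)⟩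

lemma rAvoid_trans {H : SimpleGraph V} {S : Finset V} {u v w : V}
    (h1 : RAvoid H S u v) (h2 : RAvoid H S v w) : RAvoid H S u w := by
  obtain ⟨p, hp⟩ := h1; obtain ⟨q, hq⟩ := h2
  refine ⟨p.append q, fun x hx => ?_⟩
  rcases (SimpleGraph.Walk.mem_support_append_iff p q).mp hx with h | h
  exacts [hp x h, hq x h]

lemma clique_prime (H : SimpleGraph V) (S : Finset V) (hS : H.IsClique (S : Set V)) :
    IsPrimeIn H S := by
  rintro ⟨S', hsub, hcl, u, v, hreach, hu, hv, huS, hvS, hsep⟩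
  by_cases huv : u = v
  · subst huv
    obtain ⟨s, hsS', hs⟩ := hsep SimpleGraph.Walk.nil
      (by intro x hx; simp only [SimpleGraph.Walk.support_nil, List.mem_singleton] at hx
          subst hx; exact hu)
    simp only [SimpleGraph.Walk.support_nil, List.mem_singleton] at hs
    subst hs; exact huS hsS'
  · have hadj : H.Adj u v := hS (Finset.mem_coe.mpr hu) (Finset.mem_coe.mpr hv) huv
    obtain ⟨s, hsS', hs⟩ := hsep (SimpleGraph.Walk.cons hadj SimpleGraph.Walk.nil)
      (by intro x hx
          simp only [SimpleGraph.Walk.support_cons, SimpleGraph.Walk.support_nil,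
            List.mem_cons, List.mem_singleton, List.not_mem_nil] at hx
          rcases hx with h | h | h
          · subst h; exact hu
          · subst h; exact hv
          · exact absurd h (by simp))
    simp only [SimpleGraph.Walk.support_cons, SimpleGraph.Walk.support_nil,
      List.mem_cons, List.mem_singleton, List.not_mem_nil] at hs
    rcases hs with h | h | h
    · subst h; exact huS hsS'
    · subst h; exact hvS hsS'
    · exact absurd h (by simp)

lemma prime_extend (H : SimpleGraph V) (Q : Finset V) (hQ : IsPrimeIn H Q) :
    ∃ U : Finset V, IsMpCompIn H Finset.univ U ∧ Q ⊆ U := by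
  obtain ⟨P, ⟨hQP, hP⟩, hmax⟩ := Set.Finite.exists_maximalFor Finset.card
    {P : Finset V | Q ⊆ P ∧ IsPrimeIn H P} (Set.toFinite _) ⟨Q, subset_rfl, hQ⟩
  refine ⟨P, ⟨Finset.subset_univ _, hP, ?_⟩, hQP⟩
  intro U' _ hU' hPU'
  exact Finset.eq_of_subset_of_card_le hPU'
    (hmax ⟨hQP.trans hPU', hU'⟩ (Finset.card_le_card hPU'))

lemma pair_clique {H : SimpleGraph V} {a b : V} (hab : H.Adj a b) :
    H.IsClique (({a, b} : Finset V) : Set V) := by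
  intro x hx y hy hxy
  simp only [Finset.coe_insert, Finset.coe_singleton, Set.mem_insert_iff,
    Set.mem_singleton_iff] at hx hy
  rcases hx with rfl | rfl <;> rcases hy with rfl | rfl
  · exact absurd rfl hxy
  · exact hab
  · exact hab.symm
  · exact absurd rfl hxy

lemma edge_in_mp (H : SimpleGraph V) {a b : V} (hab : H.Adj a b) :
    ∃ U, IsMpCompIn H Finset.univ U ∧ a ∈ U ∧ b ∈ U := by
  obtain ⟨U, hU, hsub⟩ := prime_extend H {a, b} (clique_prime H _ (pair_clique hab))
  exact ⟨U, hU, hsub (by simp), hsub (by simp)⟩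

lemma isCycle_transfer {G G' : SimpleGraph V} {u : V} (p : G.Walk u u)
    (h : ∀ e ∈ p.edges, e ∈ G'.edgeSet) (hc : p.IsCycle) : (p.transfer G' h).IsCycle := by
  rw [SimpleGraph.Walk.isCycle_def, SimpleGraph.Walk.isTrail_def,
    SimpleGraph.Walk.edges_transfer, SimpleGraph.Walk.support_transfer]
  refine ⟨hc.isTrail.edges_nodup, ?_, hc.support_nodup⟩
  cases p with
  | nil => exact absurd rfl hc.ne_nil
  | cons h' q => simp [SimpleGraph.Walk.transfer]; exact nofun


lemma walk_head_reachIn {H G2 : SimpleGraph V} {U : Finset V}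
    (hG2 : ∀ x y, G2.Adj x y → ReachIn H U x y) :
    ∀ {x y : V} (w : G2.Walk x y), WalkIn U w → ∀ z ∈ w.support, ReachIn H U x z := by
  intro x y w
  induction w with
  | nil =>
    intro hW z hz
    simp only [SimpleGraph.Walk.support_nil, List.mem_singleton] at hz
    subst hz
    exact ⟨SimpleGraph.Walk.nil, by
      intro t ht
      simp only [SimpleGraph.Walk.support_nil, List.mem_singleton] at ht
      subst ht; exact hW _ (by simp)⟩
  | cons h q ih =>
    intro hW z hz
    rw [SimpleGraph.Walk.support_cons, List.mem_cons] at hz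
    have hWq : WalkIn U q := by
      intro t ht; exact hW t (by rw [SimpleGraph.Walk.support_cons]; exact List.mem_cons_of_mem _ ht)
    rcases hz with rfl | hz
    · exact ⟨SimpleGraph.Walk.nil, by
        intro t ht
        simp only [SimpleGraph.Walk.support_nil, List.mem_singleton] at ht
        subst ht; exact hW _ (by rw [SimpleGraph.Walk.support_cons]; exact List.mem_cons_self)⟩
    · exact reachIn_trans (hG2 _ _ h) (ih hWq z hz)

lemma fill_reach {H H' : SimpleGraph V} (hle : H ≤ H') {U : Finset V}
    (hmpU : IsMinTriIn (inducedSG H U) U (inducedSG H' U)) :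
    ∀ a b, H'.Adj a b → a ∈ U → b ∈ U → ReachIn H U a b := by
  by_contra hcon
  push_neg at hcon
  obtain ⟨a, b, hab, haU, hbU, hnr⟩ := hcon
  set G2 : SimpleGraph V :=
    { Adj := fun x y => H'.Adj x y ∧ x ∈ U ∧ y ∈ U ∧ ReachIn H U x y
      symm := ⟨fun x y h => ⟨h.1.symm, h.2.2.1, h.2.1, reachIn_symm h.2.2.2⟩⟩
      loopless := ⟨fun x h => H'.loopless.irrefl x h.1⟩ } with hG2def
  have hG2adj : ∀ x y, G2.Adj x y → ReachIn H U x y := fun x y h => h.2.2.2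
  have htri : IsTriangulationIn (inducedSG H U) U G2 := by
    refine ⟨fun x y h => ⟨h.2.1, h.2.2.1⟩, ?_, ?_⟩
    · intro x y h hx hy
      exact ⟨hle h.1, hx, hy, ⟨SimpleGraph.Walk.cons h.1 SimpleGraph.Walk.nil, by
        intro t ht
        simp only [SimpleGraph.Walk.support_cons, SimpleGraph.Walk.support_nil,
          List.mem_cons, List.mem_singleton, List.not_mem_nil] at ht
        rcases ht with rfl | rfl | ht
        · exact hx
        · exact hy
        · exact absurd ht (by simp)⟩⟩
    · intro v p hcyc hWp hlen
      have hedges : ∀ e ∈ p.edges, e ∈ (inducedSG H' U).edgeSet := by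
        intro e he
        induction e with
        | _ x y =>
          have := p.adj_of_mem_edges he
          exact ⟨this.1, this.2.1, this.2.2.1⟩
      obtain ⟨x, y, hx, hy, hadj, hne⟩ := hmpU.1.2.2 v (p.transfer _ hedges)
        (isCycle_transfer p hedges hcyc)
        (by intro t ht; rw [SimpleGraph.Walk.support_transfer] at ht; exact hWp t ht)
        (by rw [SimpleGraph.Walk.length_transfer]; exact hlen)
      rw [SimpleGraph.Walk.support_transfer] at hx hy
      rw [SimpleGraph.Walk.edges_transfer] at hne
      have hrx : ReachIn H U v x := walk_head_reachIn hG2adj p hWp x hx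
      have hry : ReachIn H U v y := walk_head_reachIn hG2adj p hWp y hy
      exact ⟨x, y, hx, hy, ⟨hadj.1, hadj.2.1, hadj.2.2, reachIn_trans (reachIn_symm hrx) hry⟩, hne⟩
  have hle2 : G2 ≤ inducedSG H' U := fun x y h => ⟨h.1, h.2.1, h.2.2.1⟩
  have hnge : ¬ inducedSG H' U ≤ G2 := by
    intro hge
    exact hnr (hge ⟨hab, haU, hbU⟩).2.2.2
  exact hmpU.2 G2 htri (lt_iff_le_not_ge.mpr ⟨hle2, hnge⟩)


lemma edge_reachAvoid {H H' : SimpleGraph V} (hle : H ≤ H')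
    (hnew : ∀ a b, H'.Adj a b → ¬ H.Adj a b →
      ∃ U : Finset V, IsMpCompIn H Finset.univ U ∧ a ∈ U ∧ b ∈ U)
    (hmp : ∀ U : Finset V, IsMpCompIn H Finset.univ U →
      IsMinTriIn (inducedSG H U) U (inducedSG H' U))
    {S : Finset V} (hS : H.IsClique (S : Set V)) :
    ∀ a b, H'.Adj a b → a ∉ S → b ∉ S → RAvoid H S a b := by
  intro a b hab haS hbS
  by_cases hH : H.Adj a b
  · refine ⟨SimpleGraph.Walk.cons hH SimpleGraph.Walk.nil, ?_⟩
    intro t ht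
    simp only [SimpleGraph.Walk.support_cons, SimpleGraph.Walk.support_nil,
      List.mem_cons, List.mem_singleton, List.not_mem_nil] at ht
    rcases ht with rfl | rfl | ht
    · exact haS
    · exact hbS
    · exact absurd ht (by simp)
  · obtain ⟨U, hU, haU, hbU⟩ := hnew a b hab hH
    have hr : ReachIn H U a b := fill_reach hle (hmp U hU) a b hab haU hbU
    by_cases hG : GWalk H U S a b
    · obtain ⟨p, _, hp⟩ := hG; exact ⟨p, hp⟩
    · exfalso
      apply hU.2.1
      refine ⟨S ∩ U, Finset.inter_subset_right, hS.subset (by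
        rw [Finset.coe_inter]; exact Set.inter_subset_left), a, b, hr,
        haU, hbU, fun h => haS (Finset.mem_inter.mp h).1,
        fun h => hbS (Finset.mem_inter.mp h).1, ?_⟩
      intro p hpU
      by_contra hnos
      push_neg at hnos
      apply hG
      refine ⟨p, hpU, fun x hx hxS => ?_⟩
      exact hnos x (Finset.mem_inter.mpr ⟨hxS, hpU x hx⟩) hx

lemma walk_reachAvoid {H H' : SimpleGraph V} (hle : H ≤ H')
    (hnew : ∀ a b, H'.Adj a b → ¬ H.Adj a b →
      ∃ U : Finset V, IsMpCompIn H Finset.univ U ∧ a ∈ U ∧ b ∈ U)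
    (hmp : ∀ U : Finset V, IsMpCompIn H Finset.univ U →
      IsMinTriIn (inducedSG H U) U (inducedSG H' U))
    {S : Finset V} (hS : H.IsClique (S : Set V)) :
    ∀ {u v : V} (p : H'.Walk u v), (∀ x ∈ p.support, x ∉ S) → RAvoid H S u v := by
  intro u v p
  induction p with
  | nil =>
    intro hp
    exact ⟨SimpleGraph.Walk.nil, by
      intro t ht
      simp only [SimpleGraph.Walk.support_nil, List.mem_singleton] at ht
      subst ht; exact hp _ (by simp)⟩
  | @cons u c v h q ih =>
    intro hp
    have hu : u ∉ S := hp u (by rw [SimpleGraph.Walk.support_cons]; exact List.mem_cons_self)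
    have hc : c ∉ S := hp c (by
      rw [SimpleGraph.Walk.support_cons]
      exact List.mem_cons_of_mem _ q.start_mem_support)
    have hq : ∀ x ∈ q.support, x ∉ S := fun x hx => hp x (by
      rw [SimpleGraph.Walk.support_cons]; exact List.mem_cons_of_mem _ hx)
    exact rAvoid_trans (edge_reachAvoid hle hnew hmp hS u c h hu hc) (ih hq)


lemma reenter {H : SimpleGraph V} {P P' S X : Finset V}
    (henter : ∀ d e, d ∈ P' → e ∈ P → e ∉ P' → H.Adj d e → d ∈ S) :
    ∀ n (c b : V) (w : H.Walk c b), w.length ≤ n → WalkIn P w → (∀ x ∈ w.support, x ∉ X) →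
      c ∉ P' → b ∈ P' →
      ∃ (d : V) (w2 : H.Walk d b), d ∈ S ∧ w2.length < w.length ∧ WalkIn P w2 ∧
        (∀ x ∈ w2.support, x ∉ X) := by
  intro n
  induction n with
  | zero =>
    intro c b w hlen hP hX hc hb
    cases w with
    | nil => exact absurd hb hc
    | cons h q => simp at hlen
  | succ n ih =>
    intro c b w hlen hP hX hc hb
    cases w with
    | nil => exact absurd hb hc
    | @cons _ c2 _ h q =>
      have hqP : WalkIn P q := fun x hx => hP x (by
        rw [SimpleGraph.Walk.support_cons]; exact List.mem_cons_of_mem _ hx)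
      have hqX : ∀ x ∈ q.support, x ∉ X := fun x hx => hX x (by
        rw [SimpleGraph.Walk.support_cons]; exact List.mem_cons_of_mem _ hx)
      by_cases hc2 : c2 ∈ P'
      · have hcP : c ∈ P := hP c (by
          rw [SimpleGraph.Walk.support_cons]; exact List.mem_cons_self)
        refine ⟨c2, q, henter c2 c hc2 hcP hc h.symm, ?_, hqP, hqX⟩
        simp [SimpleGraph.Walk.length_cons]
      · obtain ⟨d, w2, hd, hl, hw2P, hw2X⟩ := ih c2 b q (by
          rw [SimpleGraph.Walk.length_cons] at hlen; omega) hqP hqX hc2 hb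
        refine ⟨d, w2, hd, ?_, hw2P, hw2X⟩
        rw [SimpleGraph.Walk.length_cons]; omega

lemma shortcut {H : SimpleGraph V} {P P' S X : Finset V} (hSP' : S ⊆ P')
    (hScl : H.IsClique (S : Set V))
    (henter : ∀ d e, d ∈ P' → e ∈ P → e ∉ P' → H.Adj d e → d ∈ S) :
    ∀ n (a b : V) (w : H.Walk a b), w.length ≤ n → WalkIn P w → (∀ x ∈ w.support, x ∉ X) →
      a ∈ P' → b ∈ P' → GWalk H P' X a b := by
  intro n
  induction n with
  | zero =>
    intro a b w hlen hP hX ha hb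
    cases w with
    | nil =>
      refine ⟨SimpleGraph.Walk.nil, ?_, ?_⟩ <;>
      · intro x hx
        simp only [SimpleGraph.Walk.support_nil, List.mem_singleton] at hx
        subst hx
        first
        | exact ha
        | exact hX _ (by simp)
    | cons h q => simp at hlen
  | succ n ih =>
    intro a b w hlen hP hX ha hb
    cases w with
    | nil =>
      refine ⟨SimpleGraph.Walk.nil, ?_, ?_⟩ <;>
      · intro x hx
        simp only [SimpleGraph.Walk.support_nil, List.mem_singleton] at hx
        subst hx
        first
        | exact ha
        | exact hX _ (by simp)
    | @cons _ c _ h q =>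
      have haX : a ∉ X := hX a (by
        rw [SimpleGraph.Walk.support_cons]; exact List.mem_cons_self)
      have hqP : WalkIn P q := fun x hx => hP x (by
        rw [SimpleGraph.Walk.support_cons]; exact List.mem_cons_of_mem _ hx)
      have hqX : ∀ x ∈ q.support, x ∉ X := fun x hx => hX x (by
        rw [SimpleGraph.Walk.support_cons]; exact List.mem_cons_of_mem _ hx)
      have hqlen : q.length ≤ n := by rw [SimpleGraph.Walk.length_cons] at hlen; omega
      by_cases hc : c ∈ P'
      · obtain ⟨w', hw'P, hw'X⟩ := ih c b q hqlen hqP hqX hc hb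
        refine ⟨SimpleGraph.Walk.cons h w', ?_, ?_⟩ <;>
        · intro x hx
          rw [SimpleGraph.Walk.support_cons, List.mem_cons] at hx
          rcases hx with rfl | hx
          · first
            | exact ha
            | exact haX
          · first
            | exact hw'P x hx
            | exact hw'X x hx
      · have hcP : c ∈ P := hqP c q.start_mem_support
        have haS : a ∈ S := henter a c ha hcP hc h
        obtain ⟨d, w2, hdS, hlen2, hw2P, hw2X⟩ :=
          reenter henter q.length c b q le_rfl hqP hqX hc hb
        obtain ⟨w', hw'P, hw'X⟩ := ih d b w2 (by omega) hw2P hw2X (hSP' hdS) hb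
        by_cases had : a = d
        · subst had; exact ⟨w', hw'P, hw'X⟩
        · have hadj : H.Adj a d := hScl (Finset.mem_coe.mpr haS) (Finset.mem_coe.mpr hdS) had
          refine ⟨SimpleGraph.Walk.cons hadj w', ?_, ?_⟩ <;>
          · intro x hx
            rw [SimpleGraph.Walk.support_cons, List.mem_cons] at hx
            rcases hx with rfl | hx
            · first
              | exact ha
              | exact haX
            · first
              | exact hw'P x hx
              | exact hw'X x hx

lemma lemmaR (H : SimpleGraph V) (T : Finset V)
    (hT : ∀ S : Finset V, H.IsClique (S : Set V) →
      ∀ t1 ∈ T, ∀ t2 ∈ T, t1 ∉ S → t2 ∉ S → RAvoid H S t1 t2) :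
    ∃ U : Finset V, IsMpCompIn H Finset.univ U ∧ T ⊆ U := by
  suffices h : ∃ Q : Finset V, T ⊆ Q ∧ IsPrimeIn H Q by
    obtain ⟨Q, hTQ, hQ⟩ := h
    obtain ⟨U, hU, hQU⟩ := prime_extend H Q hQ
    exact ⟨U, hU, hTQ.trans hQU⟩
  have main : ∀ n (P : Finset V), P.card ≤ n → T ⊆ P →
      (∀ (S : Finset V) u v, u ∈ P → v ∈ P → RAvoid H S u v → GWalk H P S u v) →
      ∃ Q, T ⊆ Q ∧ IsPrimeIn H Q := by
    intro n
    induction n with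
    | zero =>
      intro P hcard hTP _
      refine ⟨P, hTP, ?_⟩
      rintro ⟨S, _, _, u, v, _, hu, _⟩
      rw [Finset.card_eq_zero.mp (Nat.le_zero.mp hcard)] at hu
      exact absurd hu (Finset.notMem_empty u)
    | succ n ih =>
      intro P hcard hTP hcl
      by_cases hprime : IsPrimeIn H P
      · exact ⟨P, hTP, hprime⟩
      · obtain ⟨S, hSP, hScl, u, v, hruv, huP, hvP, huS, hvS, hsep⟩ :=
          not_not.mp hprime
        by_cases hTS : T ⊆ S
        · exact ⟨S, hTS, clique_prime H S hScl⟩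
        · obtain ⟨t0, ht0T, ht0S⟩ := Finset.not_subset.mp hTS
          set P' : Finset V :=
            S ∪ (P \ S).filter (fun x => GWalk H P S t0 x) with hP'def
          have hSP' : S ⊆ P' := Finset.subset_union_left
          have hP'P : P' ⊆ P := by
            intro x hx
            rcases Finset.mem_union.mp hx with h | h
            · exact hSP h
            · exact (Finset.mem_sdiff.mp (Finset.mem_filter.mp h).1).1
          have hmemP' : ∀ x, x ∈ P → x ∉ S → GWalk H P S t0 x → x ∈ P' := by
            intro x hxP hxS hg
            exact Finset.mem_union_right _ (Finset.mem_filter.mpr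
              ⟨Finset.mem_sdiff.mpr ⟨hxP, hxS⟩, hg⟩)
          have hgw : ∀ x, x ∈ P' → x ∉ S → GWalk H P S t0 x := by
            intro x hx hxS
            rcases Finset.mem_union.mp hx with h | h
            · exact absurd h hxS
            · exact (Finset.mem_filter.mp h).2
          -- u and v cannot both be in P'
          have hnot : ¬ (u ∈ P' ∧ v ∈ P') := by
            rintro ⟨hu', hv'⟩
            obtain ⟨wu, hwuP, hwuS⟩ := hgw u hu' huS
            obtain ⟨wv, hwvP, hwvS⟩ := hgw v hv' hvS
            obtain ⟨s, hsS, hs⟩ := hsep (wu.reverse.append wv) (by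
              intro x hx
              rcases (SimpleGraph.Walk.mem_support_append_iff _ _).mp hx with h | h
              · exact hwuP x (by
                  rw [SimpleGraph.Walk.support_reverse] at h
                  exact List.mem_reverse.mp h)
              · exact hwvP x h)
            rcases (SimpleGraph.Walk.mem_support_append_iff _ _).mp hs with h | h
            · exact hwuS s (by
                rw [SimpleGraph.Walk.support_reverse] at h
                exact List.mem_reverse.mp h) hsS
            · exact hwvS s h hsS
          have hssub : P' ⊂ P := by
            refine Finset.ssubset_iff_subset_ne.mpr ⟨hP'P, ?_⟩
            intro heq
            exact hnot ⟨heq ▸ huP, heq ▸ hvP⟩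
          have hTP' : T ⊆ P' := by
            intro t htT
            by_cases htS : t ∈ S
            · exact hSP' htS
            · exact hmemP' t (hTP htT) htS
                (hcl S t0 t (hTP ht0T) (hTP htT) (hT S hScl t0 ht0T t htT ht0S htS))
          have henter : ∀ d e, d ∈ P' → e ∈ P → e ∉ P' → H.Adj d e → d ∈ S := by
            intro d e hd heP heP' hadj
            by_contra hdS
            have heS : e ∉ S := fun h => heP' (hSP' h)
            obtain ⟨w, hwP, hwS⟩ := hgw d hd hdS
            apply heP'
            apply hmemP' e heP heS
            refine ⟨w.append (SimpleGraph.Walk.cons hadj SimpleGraph.Walk.nil), ?_, ?_⟩ <;>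
            · intro x hx
              rcases (SimpleGraph.Walk.mem_support_append_iff _ _).mp hx with h | h
              · first
                | exact hwP x h
                | exact hwS x h
              · simp only [SimpleGraph.Walk.support_cons, SimpleGraph.Walk.support_nil,
                  List.mem_cons, List.mem_singleton, List.not_mem_nil] at h
                rcases h with rfl | rfl | h
                · first
                  | exact hwP _ w.end_mem_support
                  | exact hwS _ w.end_mem_support
                · first
                  | exact heP
                  | exact heS
                · exact absurd h (by simp)
          have hclosed' : ∀ (X : Finset V) a b, a ∈ P' → b ∈ P' →
              RAvoid H X a b → GWalk H P' X a b := by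
            intro X a b ha hb hra
            obtain ⟨w, hwP, hwX⟩ := hcl X a b (hP'P ha) (hP'P hb) hra
            exact shortcut hSP' hScl henter w.length a b w le_rfl hwP hwX ha hb
          exact ih P' (by
            have := Finset.card_lt_card hssub
            omega) hTP' hclosed'
  exact main (Finset.univ.card) Finset.univ le_rfl (Finset.subset_univ _)
    (fun S u v _ _ hra => by
      obtain ⟨w, hw⟩ := hra
      exact ⟨w, fun x _ => Finset.mem_univ x, hw⟩)


lemma mem_support_closed {G : SimpleGraph V} {v : V} (c : G.Walk v v)
    (hnil : c ≠ SimpleGraph.Walk.nil) (x : V) : x ∈ c.support ↔ x ∈ c.support.tail := by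
  cases c with
  | nil => exact absurd rfl hnil
  | cons h q =>
    rw [SimpleGraph.Walk.support_cons]
    simp only [List.tail_cons]
    constructor
    · intro hx
      rcases List.mem_cons.mp hx with rfl | hx
      · exact q.end_mem_support
      · exact hx
    · exact fun hx => List.mem_cons_of_mem _ hx

lemma chordal_main {H H' : SimpleGraph V} (hle : H ≤ H')
    (hnew : ∀ a b, H'.Adj a b → ¬ H.Adj a b →
      ∃ U : Finset V, IsMpCompIn H Finset.univ U ∧ a ∈ U ∧ b ∈ U)
    (hmp : ∀ U : Finset V, IsMpCompIn H Finset.univ U →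
      IsMinTriIn (inducedSG H U) U (inducedSG H' U)) :
    ChordalIn H' Finset.univ := by
  intro v p hcyc _ hlen
  by_contra hnoc
  push_neg at hnoc
  by_cases hsepcase : ∃ (S : Finset V) (t1 t2 : V), H.IsClique (S : Set V) ∧
      t1 ∈ p.support ∧ t2 ∈ p.support ∧ t1 ∉ S ∧ t2 ∉ S ∧ ¬ RAvoid H S t1 t2
  · obtain ⟨S, t1, t2, hScl, ht1p, ht2p, ht1S, ht2S, hnRA⟩ := hsepcase
    set p' := p.rotate t1 ht1p with hp'def
    have hcyc' : p'.IsCycle := hcyc.rotate ht1p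
    have hpnil : p ≠ SimpleGraph.Walk.nil := hcyc.ne_nil
    have hp'nil : p' ≠ SimpleGraph.Walk.nil := hcyc'.ne_nil
    have hrot : p'.support.tail ~r p.support.tail := p.support_rotate t1 ht1p
    have hmemrot : ∀ x, x ∈ p'.support ↔ x ∈ p.support := by
      intro x
      rw [mem_support_closed p' hp'nil, mem_support_closed p hpnil, hrot.mem_iff]
    have ht2p' : t2 ∈ p'.support := (hmemrot t2).mpr ht2p
    set q1 := p'.takeUntil t2 ht2p' with hq1def
    set q2 := p'.dropUntil t2 ht2p' with hq2def
    have happ : q1.append q2 = p' := p'.take_spec ht2p'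
    -- find s1 on q1 and s2 on q2
    have hs1 : ∃ s ∈ q1.support, s ∈ S := by
      by_contra hno
      push_neg at hno
      exact hnRA (walk_reachAvoid hle hnew hmp hScl q1 hno)
    have hs2 : ∃ s ∈ q2.support, s ∈ S := by
      by_contra hno
      push_neg at hno
      exact hnRA (rAvoid_symm (walk_reachAvoid hle hnew hmp hScl q2 hno))
    obtain ⟨s1, hs1q, hs1S⟩ := hs1
    obtain ⟨s2, hs2q, hs2S⟩ := hs2
    have hs1t1 : s1 ≠ t1 := fun h => ht1S (h ▸ hs1S)
    have hs1t2 : s1 ≠ t2 := fun h => ht2S (h ▸ hs1S)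
    have hs2t1 : s2 ≠ t1 := fun h => ht1S (h ▸ hs2S)
    have hs2t2 : s2 ≠ t2 := fun h => ht2S (h ▸ hs2S)
    -- tail decomposition and disjointness
    have htail : p'.support.tail = q1.support.tail ++ q2.support.tail := by
      have h1 : p'.support = q1.support ++ q2.support.tail := by
        rw [← happ, SimpleGraph.Walk.support_append]
      rw [h1, SimpleGraph.Walk.support_eq_cons q1]
      simp
    have hnd : p'.support.tail.Nodup := hcyc'.support_nodup
    have hdisj : q1.support.tail.Disjoint q2.support.tail := by
      rw [htail] at hnd
      exact List.disjoint_of_nodup_append hnd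
    have hs1tail : s1 ∈ q1.support.tail := by
      rcases (SimpleGraph.Walk.mem_support_iff _).mp hs1q with h | h
      · exact absurd h hs1t1
      · exact h
    have hs2tail : s2 ∈ q2.support.tail := by
      rcases (SimpleGraph.Walk.mem_support_iff _).mp hs2q with h | h
      · exact absurd h hs2t2
      · exact h
    have hne : s1 ≠ s2 := by
      intro h
      exact hdisj hs1tail (h ▸ hs2tail)
    have hadj : H'.Adj s1 s2 :=
      hle (hScl (Finset.mem_coe.mpr hs1S) (Finset.mem_coe.mpr hs2S) hne)
    have hs1p : s1 ∈ p.support := (hmemrot s1).mp (p'.support_takeUntil_subset ht2p' hs1q)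
    have hs2p : s2 ∈ p.support := (hmemrot s2).mp (p'.support_dropUntil_subset ht2p' hs2q)
    have hedge : s(s1, s2) ∉ p.edges := by
      intro hmem
      have hmem' : s(s1, s2) ∈ p'.edges := (p.rotate_edges t1 ht1p).mem_iff.mpr hmem
      rw [← happ, SimpleGraph.Walk.edges_append, List.mem_append] at hmem'
      rcases hmem' with h | h
      · have : s2 ∈ q1.support := q1.snd_mem_support_of_mem_edges h
        have h2 : s2 ∈ q1.support.tail := by
          rcases (SimpleGraph.Walk.mem_support_iff _).mp this with h' | h'
          · exact absurd h' hs2t1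
          · exact h'
        exact hdisj h2 hs2tail
      · have : s1 ∈ q2.support := q2.fst_mem_support_of_mem_edges h
        have h2 : s1 ∈ q2.support.tail := by
          rcases (SimpleGraph.Walk.mem_support_iff _).mp this with h' | h'
          · exact absurd h' hs1t2
          · exact h'
        exact hdisj hs1tail h2
    exact hedge (hnoc s1 s2 hs1p hs2p hadj)
  · push_neg at hsepcase
    have hT : ∀ S : Finset V, H.IsClique (S : Set V) →
        ∀ t1 ∈ p.support.toFinset, ∀ t2 ∈ p.support.toFinset,
          t1 ∉ S → t2 ∉ S → RAvoid H S t1 t2 := by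
      intro S hScl t1 ht1 t2 ht2 ht1S ht2S
      exact hsepcase S t1 t2 hScl (List.mem_toFinset.mp ht1) (List.mem_toFinset.mp ht2)
        ht1S ht2S
    obtain ⟨U, hU, hTU⟩ := lemmaR H p.support.toFinset hT
    have hmemU : ∀ x ∈ p.support, x ∈ U := fun x hx => hTU (List.mem_toFinset.mpr hx)
    have hedges : ∀ e ∈ p.edges, e ∈ (inducedSG H' U).edgeSet := by
      intro e he
      induction e with
      | _ x y =>
        exact ⟨p.adj_of_mem_edges he, hmemU x (p.fst_mem_support_of_mem_edges he),
          hmemU y (p.snd_mem_support_of_mem_edges he)⟩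
    obtain ⟨x, y, hx, hy, hadj, hne⟩ := (hmp U hU).1.2.2 v (p.transfer _ hedges)
      (isCycle_transfer p hedges hcyc)
      (by intro t ht; rw [SimpleGraph.Walk.support_transfer] at ht; exact hmemU t ht)
      (by rw [SimpleGraph.Walk.length_transfer]; exact hlen)
    rw [SimpleGraph.Walk.support_transfer] at hx hy
    rw [SimpleGraph.Walk.edges_transfer] at hne
    exact hne (hnoc x y hx hy hadj.1)


end AuxProof

/-- If `H ≤ H'`, every new edge of `H'` joins two vertices of a common
mp-component of `H`, and on each mp-component `V` of `H` the induced subgraph `H'_V`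
is a minimal triangulation of `H_V`, then `H'` is a minimal triangulation of `H`. -/
theorem minimal_triangulation_of_mp_triangulations
    {V : Type} [Fintype V] [DecidableEq V] (H H' : SimpleGraph V)
    (hle : H ≤ H')
    (hnew : ∀ a b, H'.Adj a b → ¬ H.Adj a b →
      ∃ U : Finset V, IsMpCompIn H Finset.univ U ∧ a ∈ U ∧ b ∈ U)
    (hmp : ∀ U : Finset V, IsMpCompIn H Finset.univ U →
      IsMinTriIn (inducedSG H U) U (inducedSG H' U)) :
    IsMinTriIn H Finset.univ H' := by
  refine ⟨⟨fun a b _ => ⟨Finset.mem_univ a, Finset.mem_univ b⟩,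
    fun a b hab _ _ => hle hab, chordal_main hle hnew hmp⟩, ?_⟩
  intro G' hG' hlt
  have hHG' : ∀ a b, H.Adj a b → G'.Adj a b :=
    fun a b h => hG'.2.1 a b h (Finset.mem_univ a) (Finset.mem_univ b)
  obtain ⟨a, b, hab', hab⟩ : ∃ a b, H'.Adj a b ∧ ¬ G'.Adj a b := by
    by_contra hc
    push_neg at hc
    exact hlt.2 (fun x y hxy => hc x y hxy)
  have hnH : ¬ H.Adj a b := fun h => hab (hHG' a b h)
  obtain ⟨U, hU, haU, hbU⟩ := hnew a b hab' hnH
  have htri : IsTriangulationIn (inducedSG H U) U (inducedSG G' U) := by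
    refine ⟨fun x y h => ⟨h.2.1, h.2.2⟩, fun x y h hx hy => ⟨hHG' x y h.1, hx, hy⟩, ?_⟩
    intro w q hq hWq hlenq
    have hedges : ∀ e ∈ q.edges, e ∈ G'.edgeSet := by
      intro e he
      induction e with
      | _ x y => exact (q.adj_of_mem_edges he).1
    obtain ⟨x, y, hx, hy, hadj, hne⟩ := hG'.2.2 w (q.transfer _ hedges)
      (isCycle_transfer q hedges hq)
      (fun t _ => Finset.mem_univ t)
      (by rw [SimpleGraph.Walk.length_transfer]; exact hlenq)
    rw [SimpleGraph.Walk.support_transfer] at hx hy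
    rw [SimpleGraph.Walk.edges_transfer] at hne
    exact ⟨x, y, hx, hy, ⟨hadj, hWq x hx, hWq y hy⟩, hne⟩
  have hle2 : inducedSG G' U ≤ inducedSG H' U :=
    fun x y h => ⟨hlt.le h.1, h.2.1, h.2.2⟩
  have hnge : ¬ inducedSG H' U ≤ inducedSG G' U := by
    intro hge
    exact hab (hge ⟨hab', haU, hbU⟩).1
  exact (hmp U hU).2 _ htri (lt_iff_le_not_ge.mpr ⟨hle2, hnge⟩)
end

section
/- For every chain graph H on a finite vertex set N and every pairwise disjoint triplet (A,B,C) of subsets of N belonging to M_H, there exists a minimal triangulation H' of H such that (A,B,C) belongs to M_{H'}. -/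
open scoped Classical BigOperators

variable {V : Type} [Fintype V] [DecidableEq V]

namespace CG10
open Finset

variable {V : Type} [Fintype V] [DecidableEq V]

/-! ### Interface lemmas -/

lemma ugPart_adj (G : MixedGraph V) (a b : V) :
    (MixedGraph.ugPart G).Adj a b ↔ G.Adj a b ∧ G.Adj b a := Iff.rfl

lemma inducedM_adj (G : MixedGraph V) (W : Finset V) (a b : V) :
    (inducedM G W).Adj a b ↔ G.Adj a b ∧ a ∈ W ∧ b ∈ W := Iff.rfl

lemma moralG_adj (G : MixedGraph V) (a b : V) :
    (moralG G).Adj a b ↔ a ≠ b ∧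
      (G.Adj a b ∨ G.Adj b a ∨ ∃ K ∈ chainComps G, a ∈ paSet G K ∧ b ∈ paSet G K) := Iff.rfl

lemma mem_chainComp {G : MixedGraph V} {v u : V} :
    u ∈ chainComp G v ↔ (MixedGraph.ugPart G).Reachable v u := by
  simp [chainComp]

lemma mem_chainComp_self (G : MixedGraph V) (v : V) : v ∈ chainComp G v :=
  mem_chainComp.2 (SimpleGraph.Reachable.refl v)

lemma mem_chainComps {G : MixedGraph V} {K : Finset V} :
    K ∈ chainComps G ↔ ∃ v, chainComp G v = K := by
  simp [chainComps]

lemma mem_paSet {G : MixedGraph V} {K : Finset V} {a : V} :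
    a ∈ paSet G K ↔ a ∉ K ∧ ∃ b ∈ K, G.DirEdge a b := by
  simp [paSet]

lemma mem_anSet {G : MixedGraph V} {K : Finset V} {a : V} :
    a ∈ anSet G K ↔ ∃ k ∈ K, Relation.ReflTransGen G.Adj a k := by
  simp [anSet]

/-- Reachability along mixed edges. -/
abbrev Reach (G : MixedGraph V) : V → V → Prop := Relation.ReflTransGen G.Adj

/-- Same chain component (undirected connectivity). -/
abbrev SC (G : MixedGraph V) (u v : V) : Prop := (MixedGraph.ugPart G).Reachable u v

lemma mem_chainComp_iff_sc {G : MixedGraph V} {v u : V} :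
    u ∈ chainComp G v ↔ SC G u v := by
  rw [mem_chainComp]; exact ⟨fun h => h.symm, fun h => h.symm⟩

lemma sc_rtg {G : MixedGraph V} {u v : V} (h : SC G u v) :
    Relation.ReflTransGen (fun a b => G.Adj a b ∧ G.Adj b a) u v := by
  rw [SC, SimpleGraph.reachable_iff_reflTransGen] at h
  exact Relation.ReflTransGen.mono (fun a b (hab : (MixedGraph.ugPart G).Adj a b) => hab) _ _ h

lemma rtg_sc {G : MixedGraph V} {u v : V}
    (h : Relation.ReflTransGen (fun a b => G.Adj a b ∧ G.Adj b a) u v) : SC G u v := by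
  rw [SC, SimpleGraph.reachable_iff_reflTransGen]
  exact Relation.ReflTransGen.mono (fun a b (hab : G.Adj a b ∧ G.Adj b a) => hab) _ _ h

lemma sc_reach {G : MixedGraph V} {u v : V} (h : SC G u v) : Reach G u v :=
  Relation.ReflTransGen.mono (fun a b (hab : G.Adj a b ∧ G.Adj b a) => hab.1) _ _ (sc_rtg h)

lemma sc_reach' {G : MixedGraph V} {u v : V} (h : SC G u v) : Reach G v u :=
  sc_reach h.symm

lemma chainComp_eq_of_sc {G : MixedGraph V} {u v : V} (h : SC G u v) :
    chainComp G u = chainComp G v := by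
  ext w
  simp only [mem_chainComp]
  exact ⟨fun hw => h.symm.trans hw, fun hw => h.trans hw⟩

/-! ### Chain graph consequences -/

variable {H : MixedGraph V}

lemma no_dir_sc (hH : IsChainGraph H) {u v : V} (hd : H.DirEdge u v) (hsc : SC H u v) :
    False :=
  hH u v hd (sc_reach' hsc)

lemma undir_sc {u v : V} (h : H.UndirEdge u v) : SC H u v :=
  SimpleGraph.Adj.reachable ((ugPart_adj H u v).2 ⟨h.1, h.2⟩)

lemma adj_sc_or_dir {u v : V} (h : H.Adj u v) : SC H u v ∨ H.DirEdge u v := by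
  by_cases h' : H.Adj v u
  · exact Or.inl (undir_sc ⟨h, h'⟩)
  · exact Or.inr ⟨h, h'⟩

/-- Mutual reachability implies same chain component. -/
lemma mutual_reach_sc (hH : IsChainGraph H) {u v : V}
    (h1 : Reach H u v) (h2 : Reach H v u) : SC H u v := by
  induction h1 using Relation.ReflTransGen.head_induction_on with
  | refl => exact SimpleGraph.Reachable.refl v
  | head hadj hrest ih =>
    rename_i a c
    -- hadj : H.Adj a c, hrest : Reach H c v, ih : Reach H v c → SC H c v, h2 : Reach H v a
    have hca : Reach H c a := hrest.trans h2
    have hac : SC H a c := by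
      by_cases h' : H.Adj c a
      · exact undir_sc ⟨hadj, h'⟩
      · exact absurd hca (hH a c ⟨hadj, h'⟩)
    exact hac.trans (ih (h2.trans (Relation.ReflTransGen.single hadj)))

/-! ### Induced subgraph component lemmas -/

lemma indcomp_eq {G : MixedGraph V} {W : Finset V}
    (hcl : ∀ u v, G.Adj u v → G.Adj v u → v ∈ W → u ∈ W)
    {w : V} (hw : w ∈ W) : chainComp (inducedM G W) w = chainComp G w := by
  ext u
  simp only [mem_chainComp]
  constructor
  · intro h
    rw [SimpleGraph.reachable_iff_reflTransGen] at h ⊢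
    exact Relation.ReflTransGen.mono (fun a b (hab : (MixedGraph.ugPart (inducedM G W)).Adj a b) => by
      rcases hab with ⟨⟨h1, _⟩, ⟨h2, _⟩⟩
      exact ⟨h1, h2⟩) _ _ h
  · intro h
    rw [SimpleGraph.reachable_iff_reflTransGen] at h
    have key : ∀ x, Relation.ReflTransGen (fun a b => G.Adj a b ∧ G.Adj b a) w x →
        x ∈ W ∧ (MixedGraph.ugPart (inducedM G W)).Reachable w x := by
      intro x hx
      induction hx with
      | refl => exact ⟨hw, SimpleGraph.Reachable.refl w⟩
      | tail hs hlast ih =>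
        rename_i b c
        obtain ⟨hbW, hreach⟩ := ih
        have hcW : c ∈ W := hcl c b hlast.2 hlast.1 hbW
        refine ⟨hcW, hreach.trans (SimpleGraph.Adj.reachable ?_)⟩
        exact ((ugPart_adj (inducedM G W) b c).2 ⟨⟨hlast.1, hbW, hcW⟩, ⟨hlast.2, hcW, hbW⟩⟩)
    exact (key u h).2

lemma indcomp_out {G : MixedGraph V} {W : Finset V} {w : V} (hw : w ∉ W) :
    chainComp (inducedM G W) w = {w} := by
  ext u
  simp only [mem_chainComp, Finset.mem_singleton]
  constructor
  · intro h
    rw [SimpleGraph.reachable_iff_reflTransGen] at h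
    rcases h.cases_head with h | ⟨c, hc, _⟩
    · exact h.symm
    · exact absurd hc.1.2.1 hw
  · rintro rfl; exact SimpleGraph.Reachable.refl _

lemma paSet_indcomp_out {G : MixedGraph V} {W : Finset V} {w : V} (hw : w ∉ W) :
    paSet (inducedM G W) (chainComp (inducedM G W) w) = ∅ := by
  rw [indcomp_out hw]
  ext a
  simp only [mem_paSet, Finset.mem_singleton, Finset.notMem_empty, iff_false]
  rintro ⟨-, b, rfl, hd⟩
  exact hw hd.1.2.2

section Construction

variable (H : MixedGraph V) (A B C : Finset V)

/-- The relevant ancestral set. -/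
noncomputable def TT : Finset V := anSet H (A ∪ B ∪ C)

/-- The moral ancestral graph of `H` for the triple. -/
noncomputable def Gs : SimpleGraph V := moralG (inducedM H (TT H A B C))

/-- `X`-side: reachable from `A` in `Gs` avoiding `C`. -/
def pX (v : V) : Prop := v ∉ C ∧ ∃ a ∈ A,
  Relation.ReflTransGen (fun x y => (Gs H A B C).Adj x y ∧ x ∉ C ∧ y ∉ C) a v

/-- `Y`-side: in the ancestral set, but neither in `C` nor on the `X` side. -/
def pY (v : V) : Prop := v ∈ TT H A B C ∧ v ∉ C ∧ ¬ pX H A B C v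

/-- Outside the ancestral set. -/
def pO (v : V) : Prop := v ∉ TT H A B C

def pXC (v : V) : Prop := pX H A B C v ∨ v ∈ C
def pYC (v : V) : Prop := pY H A B C v ∨ v ∈ C

/-- Side compatibility for undirected fill edges. -/
def sOKu (x y : V) : Prop :=
  (pO H A B C x ∧ pO H A B C y) ∨ (pXC H A B C x ∧ pXC H A B C y) ∨
    (pYC H A B C x ∧ pYC H A B C y)

/-- Side compatibility for directed fill edges (from a parent `p` into a component vertex `v`). -/
def sOKd (p v : V) : Prop :=
  pO H A B C v ∨ v ∈ C ∨ (pX H A B C v ∧ pXC H A B C p) ∨ (pY H A B C v ∧ pYC H A B C p)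

/-- `p` is a parent of the chain component of `v`. -/
def isPa (p v : V) : Prop := ¬ SC H p v ∧ ∃ k, SC H k v ∧ H.DirEdge p k

/-- The filled chain graph `G₀`. -/
def G0 : MixedGraph V where
  Adj x y := H.Adj x y ∨ (x ≠ y ∧ SC H x y ∧ sOKu H A B C x y) ∨
    (isPa H x y ∧ sOKd H A B C x y)
  irrefl a h := by
    rcases h with h | ⟨hne, -, -⟩ | ⟨⟨hns, -⟩, -⟩
    · exact H.irrefl a h
    · exact hne rfl
    · exact hns (SimpleGraph.Reachable.refl a)

end Construction

section ConstructionLemmas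

variable {H : MixedGraph V} {A B C : Finset V}

lemma sOKu_symm {x y : V} (h : sOKu H A B C x y) : sOKu H A B C y x := by
  rcases h with ⟨h1, h2⟩ | ⟨h1, h2⟩ | ⟨h1, h2⟩
  · exact Or.inl ⟨h2, h1⟩
  · exact Or.inr (Or.inl ⟨h2, h1⟩)
  · exact Or.inr (Or.inr ⟨h2, h1⟩)

lemma mem_TT {v : V} : v ∈ TT H A B C ↔ ∃ k ∈ A ∪ B ∪ C, Reach H v k := mem_anSet

lemma TT_anc {u v : V} (h : H.Adj u v) (hv : v ∈ TT H A B C) : u ∈ TT H A B C := by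
  obtain ⟨k, hk, hr⟩ := mem_TT.1 hv
  exact mem_TT.2 ⟨k, hk, Relation.ReflTransGen.head h hr⟩

lemma reach_TT {u v : V} (h : Reach H u v) (hv : v ∈ TT H A B C) : u ∈ TT H A B C := by
  obtain ⟨k, hk, hr⟩ := mem_TT.1 hv
  exact mem_TT.2 ⟨k, hk, h.trans hr⟩

lemma sc_TT {u v : V} (h : SC H u v) (hv : v ∈ TT H A B C) : u ∈ TT H A B C :=
  reach_TT (sc_reach h) hv

lemma union_sub_TT {v : V} (hv : v ∈ A ∪ B ∪ C) : v ∈ TT H A B C :=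
  mem_TT.2 ⟨v, hv, Relation.ReflTransGen.refl⟩

lemma C_sub_TT {v : V} (hv : v ∈ C) : v ∈ TT H A B C :=
  union_sub_TT (Finset.mem_union_right _ hv)

lemma A_sub_TT {v : V} (hv : v ∈ A) : v ∈ TT H A B C :=
  union_sub_TT (Finset.mem_union_left _ (Finset.mem_union_left _ hv))

lemma B_sub_TT {v : V} (hv : v ∈ B) : v ∈ TT H A B C :=
  union_sub_TT (Finset.mem_union_left _ (Finset.mem_union_right _ hv))

lemma gs_adj_TT {u v : V} (h : (Gs H A B C).Adj u v) : u ∈ TT H A B C ∧ v ∈ TT H A B C := by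
  rcases ((moralG_adj _ u v).1 h).2 with h' | h' | ⟨K, -, hu, hv⟩
  · exact ⟨h'.2.1, h'.2.2⟩
  · exact ⟨h'.2.2, h'.2.1⟩
  · obtain ⟨-, b, -, hd⟩ := mem_paSet.1 hu
    obtain ⟨-, b', -, hd'⟩ := mem_paSet.1 hv
    exact ⟨hd.1.2.1, hd'.1.2.1⟩

lemma H_adj_gs {u v : V} (h : H.Adj u v) (hu : u ∈ TT H A B C) (hv : v ∈ TT H A B C) :
    (Gs H A B C).Adj u v := by
  refine (moralG_adj _ u v).2 ⟨?_, Or.inl ⟨h, hu, hv⟩⟩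
  rintro rfl; exact H.irrefl u h

lemma pX_TT {v : V} (hv : pX H A B C v) (hA : ∀ a ∈ A, a ∈ TT H A B C) : v ∈ TT H A B C := by
  obtain ⟨-, a, ha, hr⟩ := hv
  induction hr with
  | refl => exact hA a ha
  | tail _ hlast ih => exact (gs_adj_TT hlast.1).2

lemma pX_notC {v : V} (hv : pX H A B C v) : v ∉ C := hv.1

lemma pX_step {x y : V} (hx : pX H A B C x) (h : (Gs H A B C).Adj x y) (hy : y ∉ C) :
    pX H A B C y := by
  obtain ⟨hxC, a, ha, hr⟩ := hx
  exact ⟨hy, a, ha, hr.tail ⟨h, hxC, hy⟩⟩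

lemma pA_pX {a : V} (ha : a ∈ A) (hAC : Disjoint A C) : pX H A B C a :=
  ⟨Finset.disjoint_left.1 hAC ha, a, ha, Relation.ReflTransGen.refl⟩

/-- From `pX b` one can extract a `C`-avoiding walk in `Gs` from `A` to `b`. -/
lemma pX_walk {v : V} (hv : pX H A B C v) :
    ∃ a ∈ A, ∃ w : (Gs H A B C).Walk a v, ∀ u ∈ w.support, u ∉ C := by
  obtain ⟨hvC, a, ha, hr⟩ := hv
  refine ⟨a, ha, ?_⟩
  have haC : a ∉ C := by
    rcases hr.cases_head with h | ⟨c, hc, -⟩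
    · exact h ▸ hvC
    · exact hc.2.1
  clear hvC
  induction hr with
  | refl =>
    refine ⟨SimpleGraph.Walk.nil, ?_⟩
    intro u hu
    simp only [SimpleGraph.Walk.support_nil, List.mem_singleton] at hu
    subst hu
    exact haC
  | tail hs hlast ih =>
    obtain ⟨w, hw⟩ := ih
    refine ⟨w.concat hlast.1, ?_⟩
    intro u hu
    rw [SimpleGraph.Walk.support_concat, List.mem_append] at hu
    rcases hu with hu | hu
    · exact hw u hu
    · simp only [List.mem_singleton] at hu
      subst hu
      exact hlast.2.2

/-- `B` is disjoint from the `X` side. -/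
lemma pX_not_B (hsep : cgCI H A B C) {b : V} (hb : b ∈ B) : ¬ pX H A B C b := by
  intro hbx
  obtain ⟨a, ha, w, hw⟩ := pX_walk hbx
  have hsep' : SeparatesIn (Gs H A B C) Finset.univ A B C := hsep
  obtain ⟨c, hc, hcs⟩ := hsep' a ha b hb w (fun x _ => Finset.mem_univ x)
  exact hw c hcs hc

end ConstructionLemmas
section G0Lemmas

variable {H : MixedGraph V} {A B C : Finset V}

lemma pX_TT' {v : V} (hv : pX H A B C v) : v ∈ TT H A B C :=
  pX_TT hv (fun _ ha => A_sub_TT ha)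

lemma side_tri {v : V} (hv : v ∈ TT H A B C) : v ∈ C ∨ pX H A B C v ∨ pY H A B C v := by
  by_cases h1 : v ∈ C
  · exact Or.inl h1
  by_cases h2 : pX H A B C v
  · exact Or.inr (Or.inl h2)
  · exact Or.inr (Or.inr ⟨hv, h1, h2⟩)

lemma pY_not_pXC {v : V} (hv : pY H A B C v) : ¬ pXC H A B C v := by
  rintro (h | h)
  · exact hv.2.2 h
  · exact hv.2.1 h

lemma pX_not_pYC {v : V} (hv : pX H A B C v) : ¬ pYC H A B C v := by
  rintro (h | h)
  · exact h.2.2 hv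
  · exact hv.1 h

/-- Side propagation along `H`-edges inside the ancestral set. -/
lemma H_edge_side {u v : V} (h : H.Adj u v ∨ H.Adj v u)
    (hu : u ∈ TT H A B C) (hv : v ∈ TT H A B C) (hx : pX H A B C u) : pXC H A B C v := by
  by_cases hvC : v ∈ C
  · exact Or.inr hvC
  have hadj : (Gs H A B C).Adj u v := by
    rcases h with h | h
    · exact H_adj_gs h hu hv
    · exact (H_adj_gs h hv hu).symm
  exact Or.inl (pX_step hx hadj hvC)

lemma H_edge_not_XY {u v : V} (h : H.Adj u v ∨ H.Adj v u)
    (hu : u ∈ TT H A B C) (hv : v ∈ TT H A B C) (hx : pX H A B C u) (hy : pY H A B C v) :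
    False :=
  pY_not_pXC hy (H_edge_side h hu hv hx)

/-- Characterization of the undirected edges of `G₀`. -/
lemma g0_undir_iff (hH : IsChainGraph H) {x y : V} :
    (G0 H A B C).UndirEdge x y ↔
      H.UndirEdge x y ∨ (x ≠ y ∧ SC H x y ∧ sOKu H A B C x y) := by
  constructor
  · rintro ⟨h1, h2⟩
    rcases h1 with h1 | h1 | h1
    · rcases h2 with h2 | h2 | h2
      · exact Or.inl ⟨h1, h2⟩
      · exact Or.inr ⟨(fun hxy => h2.1 hxy.symm), h2.2.1.symm, sOKu_symm h2.2.2⟩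
      · -- H.Adj x y and isPa y x
        obtain ⟨⟨hns, k, hk, hd⟩, -⟩ := h2
        rcases adj_sc_or_dir h1 with hsc | hdir
        · exact absurd hsc.symm hns
        · exact absurd ((Relation.ReflTransGen.single hd.1).trans (sc_reach hk))
            (hH x y hdir)
    · exact Or.inr h1
    · -- isPa x y
      obtain ⟨⟨hns, k, hk, hd⟩, -⟩ := h1
      rcases h2 with h2 | h2 | h2
      · rcases adj_sc_or_dir h2 with hsc | hdir
        · exact absurd hsc.symm hns
        · exact absurd ((Relation.ReflTransGen.single hd.1).trans (sc_reach hk))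
            (hH y x hdir)
      · exact absurd h2.2.1.symm hns
      · obtain ⟨⟨hns', k', hk', hd'⟩, -⟩ := h2
        have r1 : Reach H x y := (Relation.ReflTransGen.single hd.1).trans (sc_reach hk)
        have r2 : Reach H y x := (Relation.ReflTransGen.single hd'.1).trans (sc_reach hk')
        exact absurd (mutual_reach_sc hH r1 r2) hns
  · rintro (h | ⟨hne, hsc, hok⟩)
    · exact ⟨Or.inl h.1, Or.inl h.2⟩
    · exact ⟨Or.inr (Or.inl ⟨hne, hsc, hok⟩),
        Or.inr (Or.inl ⟨hne.symm, hsc.symm, sOKu_symm hok⟩)⟩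

lemma g0_undir_sc (hH : IsChainGraph H) {x y : V} (h : (G0 H A B C).UndirEdge x y) :
    SC H x y := by
  rcases (g0_undir_iff hH).1 h with h | h
  · exact undir_sc h
  · exact h.2.1

/-- Characterization of the directed edges of `G₀`. -/
lemma g0_dir_iff (hH : IsChainGraph H) {x y : V} :
    (G0 H A B C).DirEdge x y ↔
      H.DirEdge x y ∨ (isPa H x y ∧ sOKd H A B C x y) := by
  constructor
  · rintro ⟨h1, h2⟩
    rcases h1 with h1 | h1 | h1
    · refine Or.inl ⟨h1, fun hyx => h2 (Or.inl hyx)⟩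
    · exact absurd (Or.inr (Or.inl ⟨h1.1.symm, h1.2.1.symm, sOKu_symm h1.2.2⟩)) h2
    · exact Or.inr h1
  · rintro (h | h)
    · refine ⟨Or.inl h.1, ?_⟩
      rintro (h2 | h2 | h2)
      · exact h.2 h2
      · exact no_dir_sc hH h h2.2.1.symm
      · obtain ⟨⟨-, k, hk, hd⟩, -⟩ := h2
        exact hH x y h ((Relation.ReflTransGen.single hd.1).trans (sc_reach hk))
    · refine ⟨Or.inr (Or.inr h), ?_⟩
      obtain ⟨⟨hns, k, hk, hd⟩, -⟩ := h
      have rxy : Reach H x y := (Relation.ReflTransGen.single hd.1).trans (sc_reach hk)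
      rintro (h2 | h2 | h2)
      · rcases adj_sc_or_dir h2 with hsc | hdir
        · exact hns hsc.symm
        · exact hH y x hdir rxy
      · exact hns h2.2.1.symm
      · obtain ⟨⟨hns', k', hk', hd'⟩, -⟩ := h2
        have ryx : Reach H y x := (Relation.ReflTransGen.single hd'.1).trans (sc_reach hk')
        exact hns (mutual_reach_sc hH rxy ryx)

lemma g0_dir_isPa (hH : IsChainGraph H) {x y : V} (h : (G0 H A B C).DirEdge x y) :
    isPa H x y := by
  rcases (g0_dir_iff hH).1 h with h | h
  · exact ⟨fun hsc => no_dir_sc hH h hsc, y, SimpleGraph.Reachable.refl y, h⟩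
  · exact h.1

lemma H_undir_g0 (hH : IsChainGraph H) {x y : V} (h : H.UndirEdge x y) :
    (G0 H A B C).UndirEdge x y := (g0_undir_iff hH).2 (Or.inl h)

lemma H_dir_g0 (hH : IsChainGraph H) {x y : V} (h : H.DirEdge x y) :
    (G0 H A B C).DirEdge x y := (g0_dir_iff hH).2 (Or.inl h)

/-- A single `G₀`-edge yields `H`-reachability. -/
lemma g0_adj_reach {x y : V} (h : (G0 H A B C).Adj x y) : Reach H x y := by
  rcases h with h | h | h
  · exact Relation.ReflTransGen.single h
  · exact sc_reach h.2.1
  · obtain ⟨⟨-, k, hk, hd⟩, -⟩ := h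
    exact (Relation.ReflTransGen.single hd.1).trans (sc_reach hk)

lemma g0_reach_iff {x y : V} :
    Relation.ReflTransGen (G0 H A B C).Adj x y ↔ Reach H x y := by
  constructor
  · intro h
    induction h with
    | refl => exact Relation.ReflTransGen.refl
    | tail _ hlast ih => exact ih.trans (g0_adj_reach hlast)
  · intro h
    exact Relation.ReflTransGen.mono (fun a b (hab : H.Adj a b) => Or.inl hab) _ _ h

lemma g0_anSet (S : Finset V) : anSet (G0 H A B C) S = anSet H S := by
  ext v
  simp only [mem_anSet]
  constructor
  · rintro ⟨k, hk, hr⟩; exact ⟨k, hk, g0_reach_iff.1 hr⟩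
  · rintro ⟨k, hk, hr⟩; exact ⟨k, hk, Relation.ReflTransGen.mono (fun a b (hab : H.Adj a b) => Or.inl hab) _ _ hr⟩

lemma g0_sc_iff (hH : IsChainGraph H) {x y : V} :
    SC (G0 H A B C) x y ↔ SC H x y := by
  constructor
  · intro h
    rw [SC, SimpleGraph.reachable_iff_reflTransGen] at h
    induction h with
    | refl => exact SimpleGraph.Reachable.refl _
    | tail _ hlast ih =>
      exact ih.trans (g0_undir_sc hH ⟨hlast.1, hlast.2⟩)
  · intro h
    rw [SC, SimpleGraph.reachable_iff_reflTransGen] at h ⊢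
    exact Relation.ReflTransGen.mono (fun a b (hab : (MixedGraph.ugPart H).Adj a b) => ⟨Or.inl hab.1, Or.inl hab.2⟩) _ _ h

lemma g0_chainComp (hH : IsChainGraph H) (v : V) :
    chainComp (G0 H A B C) v = chainComp H v := by
  ext u
  rw [mem_chainComp_iff_sc, mem_chainComp_iff_sc, g0_sc_iff hH]

/-- `G₀` is a chain graph. -/
lemma g0_chain (hH : IsChainGraph H) : IsChainGraph (G0 H A B C) := by
  intro x y hd hr
  obtain ⟨hns, k, hk, hdk⟩ := g0_dir_isPa hH hd
  have : Reach H k x := (sc_reach hk).trans (g0_reach_iff.1 hr)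
  exact hH x k hdk this

/-- Side propagation along `G₀`-skeleton edges: from the `X` side one stays in `X ∪ C`. -/
lemma g0_skel_X {u v : V} (h : (G0 H A B C).Adj u v ∨ (G0 H A B C).Adj v u)
    (hx : pX H A B C u) (hv : v ∈ TT H A B C) : pXC H A B C v := by
  have hu : u ∈ TT H A B C := pX_TT' hx
  have hcase : ∀ w z : V, (G0 H A B C).Adj w z → (w = u ∧ z = v) ∨ (w = v ∧ z = u) →
      pXC H A B C v := by
    rintro w z hadj hwz
    rcases hadj with h1 | h1 | h1
    · refine H_edge_side ?_ hu hv hx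
      rcases hwz with ⟨rfl, rfl⟩ | ⟨rfl, rfl⟩
      · exact Or.inl h1
      · exact Or.inr h1
    · -- fill edge
      obtain ⟨-, -, hok⟩ := h1
      have hok' : sOKu H A B C u v := by
        rcases hwz with ⟨rfl, rfl⟩ | ⟨rfl, rfl⟩
        · exact hok
        · exact sOKu_symm hok
      rcases hok' with ⟨h2, -⟩ | ⟨-, h2⟩ | ⟨h2, -⟩
      · exact absurd hu h2
      · exact h2
      · exact absurd h2 (pX_not_pYC hx)
    · -- directed fill
      obtain ⟨-, hok⟩ := h1
      rcases hwz with ⟨rfl, rfl⟩ | ⟨rfl, rfl⟩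
      · -- sOKd u v
        rcases hok with h2 | h2 | h2 | h2
        · exact absurd hv h2
        · exact Or.inr h2
        · exact Or.inl h2.1
        · exact absurd h2.2 (pX_not_pYC hx)
      · -- sOKd v u
        rcases hok with h2 | h2 | h2 | h2
        · exact absurd hu h2
        · exact absurd h2 hx.1
        · exact h2.2
        · exact absurd h2.1 (fun hy => hy.2.2 hx)
  rcases h with h | h
  · exact hcase u v h (Or.inl ⟨rfl, rfl⟩)
  · exact hcase v u h (Or.inr ⟨rfl, rfl⟩)

lemma g0_skel_Y {u v : V} (h : (G0 H A B C).Adj u v ∨ (G0 H A B C).Adj v u)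
    (hy : pY H A B C u) (hv : v ∈ TT H A B C) : pYC H A B C v := by
  rcases side_tri hv with h1 | h1 | h1
  · exact Or.inr h1
  · exact absurd (g0_skel_X (h.symm.imp id id) h1 hy.1) (pY_not_pXC hy)
  · exact Or.inl h1

/-- Parents of a chain component inside `T` cannot come from both sides. -/
lemma pa_one_sided (hH : IsChainGraph H) {x y k₁ k₂ : V}
    (hsc : SC H k₁ k₂) (hk₁T : k₁ ∈ TT H A B C)
    (hd₁ : H.DirEdge x k₁) (hd₂ : H.DirEdge y k₂)
    (hx : pX H A B C x) (hy : pY H A B C y) : False := by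
  have hk₂T : k₂ ∈ TT H A B C := sc_TT hsc.symm hk₁T
  have hxT : x ∈ TT H A B C := TT_anc hd₁.1 hk₁T
  have hyT : y ∈ TT H A B C := TT_anc hd₂.1 hk₂T
  have hcl : ∀ u v, H.Adj u v → H.Adj v u → v ∈ TT H A B C → u ∈ TT H A B C :=
    fun u v h _ hv => TT_anc h hv
  set Kc := chainComp (inducedM H (TT H A B C)) k₁ with hKc
  have hKeq : Kc = chainComp H k₁ := indcomp_eq hcl hk₁T
  have hxP : x ∈ paSet (inducedM H (TT H A B C)) Kc := by
    rw [mem_paSet]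
    constructor
    · rw [hKeq, mem_chainComp_iff_sc]
      exact fun hs => no_dir_sc hH hd₁ hs
    · refine ⟨k₁, ?_, ⟨⟨hd₁.1, hxT, hk₁T⟩, fun hcon => hd₁.2 hcon.1⟩⟩
      rw [hKeq]; exact mem_chainComp_self H k₁
  have hyP : y ∈ paSet (inducedM H (TT H A B C)) Kc := by
    rw [mem_paSet]
    constructor
    · rw [hKeq, mem_chainComp_iff_sc]
      exact fun hs => no_dir_sc hH hd₂ (hs.trans hsc)
    · refine ⟨k₂, ?_, ⟨⟨hd₂.1, hyT, hk₂T⟩, fun hcon => hd₂.2 hcon.1⟩⟩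
      rw [hKeq, mem_chainComp_iff_sc]; exact hsc.symm
  have hne : x ≠ y := by
    rintro rfl; exact hy.2.2 hx
  have hadj : (Gs H A B C).Adj x y :=
    (moralG_adj _ x y).2 ⟨hne, Or.inr (Or.inr ⟨Kc, mem_chainComps.2 ⟨k₁, rfl⟩, hxP, hyP⟩)⟩
  exact hy.2.2 (pX_step hx hadj hy.2.1)

end G0Lemmas
section KeyD

variable (H : MixedGraph V) (A B C : Finset V)

/-- Height of a vertex: number of vertices strictly below it in reachability order. -/
noncomputable def hgt (v : V) : ℕ :=
  (Finset.univ.filter (fun u => Reach H u v ∧ ¬ Reach H v u)).card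

noncomputable def sideR (v : V) : ℕ :=
  if v ∈ C then 0 else if pX H A B C v then 1 else 2

noncomputable def key (v : V) : ℕ :=
  (3 * hgt H v + sideR H A B C v) * Fintype.card V + (Fintype.equivFin V v).val

/-- The DAG orientation of `G₀`. -/
def DD : MixedGraph V where
  Adj x y := ((G0 H A B C).Adj x y ∨ (G0 H A B C).Adj y x) ∧
    key H A B C x < key H A B C y
  irrefl a h := lt_irrefl _ h.2

end KeyD

section KeyLemmas

variable {H : MixedGraph V} {A B C : Finset V}

lemma keylt {a b i j n : ℕ} (h : a < b) (hi : i < n) : a*n+i < b*n+j := by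
  calc a*n+i < a*n+n := by omega
  _ = (a+1)*n := by ring
  _ ≤ b*n := Nat.mul_le_mul_right n h
  _ ≤ b*n+j := Nat.le_add_right _ _

lemma idx_lt (v : V) : ((Fintype.equivFin V) v).val < Fintype.card V :=
  ((Fintype.equivFin V) v).isLt

lemma sideR_le (v : V) : sideR H A B C v ≤ 2 := by
  unfold sideR; split <;> [omega; skip]; split <;> omega

lemma sideR_eq_zero {v : V} : sideR H A B C v = 0 ↔ v ∈ C := by
  unfold sideR
  split
  · simp_all
  · split <;> simp_all

lemma key_lt_of_hgt {u v : V} (h : hgt H u < hgt H v) : key H A B C u < key H A B C v := by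
  refine keylt ?_ (idx_lt u)
  have h1 := sideR_le (A := A) (B := B) (C := C) (H := H) u
  omega

lemma key_lt_of_side {u v : V} (h : hgt H u = hgt H v)
    (hs : sideR H A B C u < sideR H A B C v) : key H A B C u < key H A B C v := by
  refine keylt ?_ (idx_lt u)
  omega

lemma key_inj {u v : V} (h : key H A B C u = key H A B C v) : u = v := by
  unfold key at h
  have hu := idx_lt (V := V) u
  have hv := idx_lt (V := V) v
  rcases lt_trichotomy (3 * hgt H u + sideR H A B C u) (3 * hgt H v + sideR H A B C v) with
    hlt | heq | hlt
  · exact absurd h (Nat.ne_of_lt (keylt hlt hu))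
  · rw [heq] at h
    have : ((Fintype.equivFin V) u).val = ((Fintype.equivFin V) v).val := by omega
    have := Fin.val_injective this
    exact (Fintype.equivFin V).injective this
  · exact absurd h.symm (Nat.ne_of_lt (keylt hlt hv))

lemma side_le_of_key_le {u v : V} (h : hgt H u = hgt H v)
    (hk : key H A B C u ≤ key H A B C v) : sideR H A B C u ≤ sideR H A B C v := by
  by_contra hcon
  exact absurd hk (not_le.2 (key_lt_of_side h.symm (by omega)))

lemma hgt_sc {u v : V} (h : SC H u v) : hgt H u = hgt H v := by
  unfold hgt
  congr 1
  ext w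
  simp only [Finset.mem_filter, Finset.mem_univ, true_and]
  constructor
  · rintro ⟨h1, h2⟩
    exact ⟨h1.trans (sc_reach h), fun hc => h2 ((sc_reach h).trans hc)⟩
  · rintro ⟨h1, h2⟩
    exact ⟨h1.trans (sc_reach h.symm), fun hc => h2 ((sc_reach h.symm).trans hc)⟩

lemma hgt_isPa (hH : IsChainGraph H) {p v : V} (h : isPa H p v) : hgt H p < hgt H v := by
  obtain ⟨hns, k, hk, hd⟩ := h
  have hpv : Reach H p v := (Relation.ReflTransGen.single hd.1).trans (sc_reach hk)
  have hnvp : ¬ Reach H v p := by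
    intro hvp
    exact hH p k hd ((sc_reach hk).trans hvp)
  refine Finset.card_lt_card ⟨?_, ?_⟩
  · intro w hw
    simp only [Finset.mem_filter, Finset.mem_univ, true_and] at hw ⊢
    exact ⟨hw.1.trans hpv, fun hc => hw.2 (hpv.trans hc)⟩
  · intro hsub
    have hp : p ∈ Finset.univ.filter (fun u => Reach H u v ∧ ¬ Reach H v u) := by
      simp only [Finset.mem_filter, Finset.mem_univ, true_and]
      exact ⟨hpv, hnvp⟩
    have := hsub hp
    simp only [Finset.mem_filter, Finset.mem_univ, true_and] at this
    exact this.2 Relation.ReflTransGen.refl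

lemma g0_ne {x y : V} (h : (G0 H A B C).Adj x y) : x ≠ y := by
  rintro rfl; exact (G0 H A B C).irrefl x h

lemma g0_dir_key (hH : IsChainGraph H) {x y : V} (h : (G0 H A B C).DirEdge x y) :
    key H A B C x < key H A B C y :=
  key_lt_of_hgt (hgt_isPa hH (g0_dir_isPa hH h))

lemma dd_adj_g0 (hH : IsChainGraph H) {x y : V} (h : (DD H A B C).Adj x y) :
    (G0 H A B C).Adj x y := by
  obtain ⟨hor, hk⟩ := h
  rcases hor with h | h
  · exact h
  · by_cases h2 : (G0 H A B C).Adj x y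
    · exact h2
    · exact absurd hk (not_lt.2 (le_of_lt (g0_dir_key hH ⟨h, h2⟩)))

lemma dd_skel {x y : V} (h : (G0 H A B C).Adj x y ∨ (G0 H A B C).Adj y x) :
    (DD H A B C).Adj x y ∨ (DD H A B C).Adj y x := by
  have hne : x ≠ y := by
    rcases h with h | h
    · exact g0_ne h
    · exact (g0_ne h).symm
  rcases lt_trichotomy (key H A B C x) (key H A B C y) with hk | hk | hk
  · exact Or.inl ⟨h, hk⟩
  · exact absurd (key_inj hk) hne
  · exact Or.inr ⟨h.symm, hk⟩

lemma dd_rtg_key {x y : V} (h : Relation.ReflTransGen (DD H A B C).Adj x y) :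
    key H A B C x ≤ key H A B C y := by
  induction h with
  | refl => exact le_refl _
  | tail _ hlast ih => exact le_of_lt (lt_of_le_of_lt ih hlast.2)

lemma dd_dag : IsDAG (DD H A B C) := by
  constructor
  · intro a b hab hba
    exact absurd hba.2 (not_lt.2 (le_of_lt hab.2))
  · intro a b hd hr
    exact absurd (dd_rtg_key hr) (not_le.2 hd.1.2)

/-! ### Component minima -/

/-- Minimal-key element of a finset. -/
noncomputable def mfinK (K : Finset V) (h : K.Nonempty) : V :=
  (Finset.exists_min_image K (key H A B C) h).choose

lemma mfinK_mem {K : Finset V} (h : K.Nonempty) : mfinK (H := H) (A := A) (B := B) (C := C) K h ∈ K :=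
  (Finset.exists_min_image K (key H A B C) h).choose_spec.1

lemma mfinK_min {K : Finset V} (h : K.Nonempty) {u : V} (hu : u ∈ K) :
    key H A B C (mfinK (H := H) (A := A) (B := B) (C := C) K h) ≤ key H A B C u :=
  (Finset.exists_min_image K (key H A B C) h).choose_spec.2 u hu

lemma mfinK_congr {K K' : Finset V} (h : K.Nonempty) (h' : K'.Nonempty) (he : K = K') :
    mfinK (H := H) (A := A) (B := B) (C := C) K h = mfinK (H := H) (A := A) (B := B) (C := C) K' h' := by
  subst he; rfl

/-- Minimal-key element of the chain component of `v`. -/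
noncomputable def mfin (v : V) : V :=
  mfinK (H := H) (A := A) (B := B) (C := C) (chainComp H v) ⟨v, mem_chainComp_self H v⟩

lemma mfin_sc (v : V) : SC H (mfin (H := H) (A := A) (B := B) (C := C) v) v := by
  have h := mfinK_mem (H := H) (A := A) (B := B) (C := C) (K := chainComp H v)
    ⟨v, mem_chainComp_self H v⟩
  exact mem_chainComp_iff_sc.1 h

lemma mfin_min {v u : V} (hu : SC H u v) :
    key H A B C (mfin (H := H) (A := A) (B := B) (C := C) v) ≤ key H A B C u := by
  have h := mfinK_min (H := H) (A := A) (B := B) (C := C) (K := chainComp H v)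
    ⟨v, mem_chainComp_self H v⟩ (mem_chainComp_iff_sc.2 hu)
  exact h

lemma mfin_congr {u v : V} (h : SC H u v) :
    mfin (H := H) (A := A) (B := B) (C := C) u = mfin (H := H) (A := A) (B := B) (C := C) v :=
  mfinK_congr _ _ (chainComp_eq_of_sc h)

end KeyLemmas
section MfinLemmas

variable {H : MixedGraph V} {A B C : Finset V}

lemma H_edge_side_Y {u v : V} (h : H.Adj u v ∨ H.Adj v u)
    (hu : u ∈ TT H A B C) (hv : v ∈ TT H A B C) (hy : pY H A B C u) : pYC H A B C v := by
  rcases side_tri hv with h1 | h1 | h1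
  · exact Or.inr h1
  · exact absurd (H_edge_side h.symm hv hu h1) (pY_not_pXC hy)
  · exact Or.inl h1

lemma comp_side_X {u v : V} (hsc : SC H u v) (hx : pX H A B C v)
    (hC : ∀ w, SC H w v → w ∉ C) : pX H A B C u := by
  have h := sc_rtg hsc.symm
  have main : ∀ x, Relation.ReflTransGen (fun a b => H.Adj a b ∧ H.Adj b a) v x →
      pX H A B C x ∧ SC H x v := by
    intro x hx'
    induction hx' with
    | refl => exact ⟨hx, SimpleGraph.Reachable.refl v⟩
    | tail hs hlast ih =>
      rename_i b c
      obtain ⟨hxb, hscb⟩ := ih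
      have hscc : SC H c v := (undir_sc ⟨hlast.2, hlast.1⟩).trans hscb
      have hcC : c ∉ C := hC c hscc
      have hbT : b ∈ TT H A B C := pX_TT' hxb
      have hcT : c ∈ TT H A B C := sc_TT hscc (pX_TT' hx)
      rcases H_edge_side (Or.inl hlast.1) hbT hcT hxb with h1 | h1
      · exact ⟨h1, hscc⟩
      · exact absurd h1 hcC
  exact (main u h).1

lemma comp_side_Y {u v : V} (hsc : SC H u v) (hy : pY H A B C v)
    (hC : ∀ w, SC H w v → w ∉ C) : pY H A B C u := by
  have huT : u ∈ TT H A B C := sc_TT hsc hy.1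
  have huC : u ∉ C := hC u hsc
  rcases side_tri huT with h1 | h1 | h1
  · exact absurd h1 huC
  · have : pX H A B C v :=
      comp_side_X hsc.symm h1 (fun w hw => hC w (hw.trans hsc))
    exact absurd this hy.2.2
  · exact h1

lemma mfin_C_of {v w : V} (hw : SC H w v) (hwC : w ∈ C) :
    mfin (H := H) (A := A) (B := B) (C := C) v ∈ C := by
  have h1 : hgt H (mfin (H := H) (A := A) (B := B) (C := C) v) = hgt H w :=
    hgt_sc ((mfin_sc v).trans hw.symm)
  have h2 := mfin_min (H := H) (A := A) (B := B) (C := C) hw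
  have h3 := side_le_of_key_le h1 h2
  have h4 : sideR H A B C w = 0 := sideR_eq_zero.2 hwC
  rw [← sideR_eq_zero (H := H) (A := A) (B := B)]
  omega

/-- The component minimum is `G₀`-adjacent to every other component member. -/
lemma mfin_adj {v u : V} (hu : SC H u v)
    (hne : u ≠ mfin (H := H) (A := A) (B := B) (C := C) v) :
    (G0 H A B C).Adj (mfin (H := H) (A := A) (B := B) (C := C) v) u := by
  set m := mfin (H := H) (A := A) (B := B) (C := C) v with hm
  have hscm : SC H m u := (mfin_sc v).trans hu.symm
  refine Or.inr (Or.inl ⟨hne.symm, hscm, ?_⟩)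
  by_cases hT : v ∈ TT H A B C
  · have hmT : m ∈ TT H A B C := sc_TT (mfin_sc v) hT
    have huT : u ∈ TT H A B C := sc_TT hu hT
    by_cases hC : ∃ w, SC H w v ∧ w ∈ C
    · obtain ⟨w, hw1, hw2⟩ := hC
      have hmC : m ∈ C := mfin_C_of hw1 hw2
      rcases side_tri huT with h1 | h1 | h1
      · exact Or.inr (Or.inl ⟨Or.inr hmC, Or.inr h1⟩)
      · exact Or.inr (Or.inl ⟨Or.inr hmC, Or.inl h1⟩)
      · exact Or.inr (Or.inr ⟨Or.inr hmC, Or.inl h1⟩)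
    · push_neg at hC
      have hCf : ∀ w, SC H w v → w ∉ C := hC
      rcases side_tri hmT with h1 | h1 | h1
      · exact absurd h1 (hCf m (mfin_sc v))
      · have hxu : pX H A B C u :=
          comp_side_X hscm.symm h1 (fun w hw => hCf w (hw.trans (mfin_sc v)))
        exact Or.inr (Or.inl ⟨Or.inl h1, Or.inl hxu⟩)
      · have hyu : pY H A B C u :=
          comp_side_Y hscm.symm h1 (fun w hw => hCf w (hw.trans (mfin_sc v)))
        exact Or.inr (Or.inr ⟨Or.inl h1, Or.inl hyu⟩)
  · have hmT : m ∉ TT H A B C := fun h => hT (sc_TT (mfin_sc v).symm h)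
    have huT : u ∉ TT H A B C := fun h => hT (sc_TT hu.symm h)
    exact Or.inl ⟨hmT, huT⟩

lemma mfin_dd_adj {v u : V} (hu : SC H u v)
    (hne : u ≠ mfin (H := H) (A := A) (B := B) (C := C) v) :
    (DD H A B C).Adj (mfin (H := H) (A := A) (B := B) (C := C) v) u := by
  refine ⟨Or.inl (mfin_adj hu hne), ?_⟩
  refine lt_of_le_of_ne (mfin_min hu) (fun he => hne (key_inj he).symm)

/-- Every parent of a component points (in `DD`) at the component minimum. -/
lemma pa_dd_mfin (hH : IsChainGraph H) {p v : V} (hp : isPa H p v) :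
    (DD H A B C).Adj p (mfin (H := H) (A := A) (B := B) (C := C) v) := by
  set m := mfin (H := H) (A := A) (B := B) (C := C) v with hm
  have hscmv : SC H m v := mfin_sc v
  have hpm : isPa H p m := by
    obtain ⟨hns, k, hk, hd⟩ := hp
    exact ⟨fun h => hns (h.trans hscmv), k, hk.trans hscmv.symm, hd⟩
  have hok : sOKd H A B C p m := by
    by_cases hT : m ∈ TT H A B C
    · rcases side_tri hT with h1 | h1 | h1
      · exact Or.inr (Or.inl h1)
      · -- pX m ; the component of m is C-free
        have hCf : ∀ w, SC H w m → w ∉ C := by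
          intro w hw hwC
          have hmm : mfin (H := H) (A := A) (B := B) (C := C) m ∈ C := mfin_C_of hw hwC
          have hmeq : mfin (H := H) (A := A) (B := B) (C := C) m = m :=
            (mfin_congr hscmv).trans hm.symm
          exact h1.1 (hmeq ▸ hmm)
        obtain ⟨-, k, hk, hd⟩ := hpm
        have hxk : pX H A B C k := comp_side_X hk h1 hCf
        have hkT : k ∈ TT H A B C := sc_TT hk hT
        have hpT : p ∈ TT H A B C := TT_anc hd.1 hkT
        exact Or.inr (Or.inr (Or.inl ⟨h1, H_edge_side (Or.inr hd.1) hkT hpT hxk⟩))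
      · -- pY m
        have hCf : ∀ w, SC H w m → w ∉ C := by
          intro w hw hwC
          have hmm : mfin (H := H) (A := A) (B := B) (C := C) m ∈ C := mfin_C_of hw hwC
          have hmeq : mfin (H := H) (A := A) (B := B) (C := C) m = m :=
            (mfin_congr hscmv).trans hm.symm
          exact h1.2.1 (hmeq ▸ hmm)
        obtain ⟨-, k, hk, hd⟩ := hpm
        have hyk : pY H A B C k := comp_side_Y hk h1 hCf
        have hkT : k ∈ TT H A B C := sc_TT hk hT
        have hpT : p ∈ TT H A B C := TT_anc hd.1 hkT
        exact Or.inr (Or.inr (Or.inr ⟨h1, H_edge_side_Y (Or.inr hd.1) hkT hpT hyk⟩))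
    · exact Or.inl hT
  have hadj : (G0 H A B C).Adj p m := Or.inr (Or.inr ⟨hpm, hok⟩)
  exact ⟨Or.inl hadj, key_lt_of_hgt (hgt_isPa hH hpm)⟩

end MfinLemmas
section Triple

variable (H : MixedGraph V) (A B C : Finset V)

noncomputable def WG (S : Finset V) : Finset V := anSet (G0 H A B C) S
noncomputable def WD (S : Finset V) : Finset V := anSet (DD H A B C) S
noncomputable def MGg (S : Finset V) : SimpleGraph V :=
  moralG (inducedM (G0 H A B C) (WG H A B C S))
noncomputable def MDd (S : Finset V) : SimpleGraph V :=
  moralG (inducedM (DD H A B C) (WD H A B C S))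

end Triple

section TripleLemmas

variable {H : MixedGraph V} {A B C : Finset V} {S : Finset V}

lemma mem_WG {v : V} : v ∈ WG H A B C S ↔ ∃ k ∈ S, Reach H v k := by
  rw [WG, g0_anSet, mem_anSet]

lemma S_sub_WG {v : V} (hv : v ∈ S) : v ∈ WG H A B C S :=
  mem_WG.2 ⟨v, hv, Relation.ReflTransGen.refl⟩

lemma S_sub_WD {v : V} (hv : v ∈ S) : v ∈ WD H A B C S :=
  mem_anSet.2 ⟨v, hv, Relation.ReflTransGen.refl⟩

lemma WD_sub_WG (hH : IsChainGraph H) {v : V} (hv : v ∈ WD H A B C S) :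
    v ∈ WG H A B C S := by
  obtain ⟨k, hk, hr⟩ := mem_anSet.1 hv
  refine mem_WG.2 ⟨k, hk, ?_⟩
  clear hk
  induction hr with
  | refl => exact Relation.ReflTransGen.refl
  | tail _ hlast ih => exact ih.trans (g0_adj_reach (dd_adj_g0 hH hlast))

lemma reach_WG {u v : V} (h : Reach H u v) (hv : v ∈ WG H A B C S) : u ∈ WG H A B C S := by
  obtain ⟨k, hk, hr⟩ := mem_WG.1 hv
  exact mem_WG.2 ⟨k, hk, h.trans hr⟩

lemma sc_WG {u v : V} (h : SC H u v) (hv : v ∈ WG H A B C S) : u ∈ WG H A B C S :=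
  reach_WG (sc_reach h) hv

lemma dd_adj_WD {x y : V} (h : (DD H A B C).Adj x y) (hy : y ∈ WD H A B C S) :
    x ∈ WD H A B C S := by
  obtain ⟨k, hk, hr⟩ := mem_anSet.1 hy
  exact mem_anSet.2 ⟨k, hk, Relation.ReflTransGen.head h hr⟩

/-- Component minima of ancestral components are `DD`-ancestral. -/
lemma mfin_WD (hH : IsChainGraph H) {v : V} (hv : v ∈ WG H A B C S) :
    mfin (H := H) (A := A) (B := B) (C := C) v ∈ WD H A B C S := by
  obtain ⟨k, hk, hr⟩ := mem_WG.1 hv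
  clear hv
  induction hr using Relation.ReflTransGen.head_induction_on with
  | refl =>
    have hk' : k ∈ WD H A B C S := S_sub_WD hk
    by_cases he : k = mfin (H := H) (A := A) (B := B) (C := C) k
    · exact he ▸ hk'
    · exact dd_adj_WD (mfin_dd_adj (SimpleGraph.Reachable.refl k) he) hk'
  | head hadj hrest ih =>
    rename_i a c
    rcases adj_sc_or_dir hadj with hsc | hdir
    · rw [mfin_congr hsc]; exact ih
    · have hpa : isPa H a c :=
        ⟨fun h => no_dir_sc hH hdir h, c, SimpleGraph.Reachable.refl c, hdir⟩
      have h1 : (DD H A B C).Adj a (mfin (H := H) (A := A) (B := B) (C := C) c) :=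
        pa_dd_mfin hH hpa
      have haWD : a ∈ WD H A B C S := dd_adj_WD h1 ih
      by_cases he : a = mfin (H := H) (A := A) (B := B) (C := C) a
      · exact he ▸ haWD
      · exact dd_adj_WD (mfin_dd_adj (SimpleGraph.Reachable.refl a) he) haWD

lemma isPa_sc {p v w : V} (h : isPa H p v) (hsc : SC H v w) : isPa H p w := by
  obtain ⟨hns, k, hk, hd⟩ := h
  exact ⟨fun hc => hns (hc.trans hsc.symm), k, hk.trans hsc, hd⟩

lemma pa_WD (hH : IsChainGraph H) {p v : V} (hp : isPa H p v) (hv : v ∈ WG H A B C S) :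
    p ∈ WD H A B C S :=
  dd_adj_WD (pa_dd_mfin hH hp) (mfin_WD hH hv)

/-- Chain components of the induced graph on `WG`. -/
lemma ind_comp_g0 (hH : IsChainGraph H) {w : V} (hw : w ∈ WG H A B C S) :
    chainComp (inducedM (G0 H A B C) (WG H A B C S)) w = chainComp H w := by
  have hcl : ∀ u v, (G0 H A B C).Adj u v → (G0 H A B C).Adj v u →
      v ∈ WG H A B C S → u ∈ WG H A B C S := by
    intro u v h1 h2 hv
    exact sc_WG (g0_undir_sc hH ⟨h1, h2⟩) hv
  rw [indcomp_eq hcl hw, g0_chainComp hH]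

lemma dd_comp_singleton {W : Finset V} (w : V) :
    chainComp (inducedM (DD H A B C) W) w = {w} := by
  ext u
  simp only [mem_chainComp, Finset.mem_singleton]
  constructor
  · intro h
    rw [SimpleGraph.reachable_iff_reflTransGen] at h
    rcases h.cases_head with h | ⟨c, hc, -⟩
    · exact h.symm
    · exact absurd hc.2.1.2 (not_lt.2 (le_of_lt hc.1.1.2))
  · rintro rfl; exact SimpleGraph.Reachable.refl _

/-- Case analysis for edges of the moral graph `MGg`. -/
lemma mg_cases (hH : IsChainGraph H) {x y : V} (h : (MGg H A B C S).Adj x y) :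
    x ≠ y ∧ x ∈ WG H A B C S ∧ y ∈ WG H A B C S ∧
      (((G0 H A B C).Adj x y ∨ (G0 H A B C).Adj y x) ∨
        ∃ w, w ∈ WG H A B C S ∧ isPa H x w ∧ isPa H y w) := by
  obtain ⟨hne, hcase⟩ := (moralG_adj _ x y).1 h
  rcases hcase with h1 | h1 | ⟨K, hK, hx, hy⟩
  · exact ⟨hne, h1.2.1, h1.2.2, Or.inl (Or.inl h1.1)⟩
  · exact ⟨hne, h1.2.2, h1.2.1, Or.inl (Or.inr h1.1)⟩
  · obtain ⟨w, rfl⟩ := mem_chainComps.1 hK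
    by_cases hw : w ∈ WG H A B C S
    · rw [ind_comp_g0 hH hw] at hx hy
      obtain ⟨hx1, k₁, hk₁, hd₁⟩ := mem_paSet.1 hx
      obtain ⟨hy1, k₂, hk₂, hd₂⟩ := mem_paSet.1 hy
      have hxWG : x ∈ WG H A B C S := hd₁.1.2.1
      have hyWG : y ∈ WG H A B C S := hd₂.1.2.1
      have hdx : (G0 H A B C).DirEdge x k₁ := by
        refine ⟨hd₁.1.1, fun hc => hd₁.2 ⟨hc, hd₁.1.2.2, hd₁.1.2.1⟩⟩
      have hdy : (G0 H A B C).DirEdge y k₂ := by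
        refine ⟨hd₂.1.1, fun hc => hd₂.2 ⟨hc, hd₂.1.2.2, hd₂.1.2.1⟩⟩
      refine ⟨hne, hxWG, hyWG, Or.inr ⟨w, hw, ?_, ?_⟩⟩
      · exact isPa_sc (g0_dir_isPa hH hdx) (mem_chainComp_iff_sc.1 hk₁)
      · exact isPa_sc (g0_dir_isPa hH hdy) (mem_chainComp_iff_sc.1 hk₂)
    · rw [paSet_indcomp_out hw] at hx
      exact absurd hx (Finset.notMem_empty x)

/-- Case analysis for edges of the moral graph `MDd`. -/
lemma md_cases {x y : V} (h : (MDd H A B C S).Adj x y) :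
    x ≠ y ∧ x ∈ WD H A B C S ∧ y ∈ WD H A B C S ∧
      (((DD H A B C).Adj x y ∨ (DD H A B C).Adj y x) ∨
        ∃ w, w ∈ WD H A B C S ∧ (DD H A B C).Adj x w ∧ (DD H A B C).Adj y w) := by
  obtain ⟨hne, hcase⟩ := (moralG_adj _ x y).1 h
  rcases hcase with h1 | h1 | ⟨K, hK, hx, hy⟩
  · exact ⟨hne, h1.2.1, h1.2.2, Or.inl (Or.inl h1.1)⟩
  · exact ⟨hne, h1.2.2, h1.2.1, Or.inl (Or.inr h1.1)⟩
  · obtain ⟨w, rfl⟩ := mem_chainComps.1 hK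
    rw [dd_comp_singleton] at hx hy
    obtain ⟨-, k₁, hk₁, hd₁⟩ := mem_paSet.1 hx
    obtain ⟨-, k₂, hk₂, hd₂⟩ := mem_paSet.1 hy
    rw [Finset.mem_singleton] at hk₁ hk₂
    subst hk₁; subst hk₂
    exact ⟨hne, hd₁.1.2.1, hd₂.1.2.1,
      Or.inr ⟨k₂, hd₁.1.2.2, hd₁.1.1, hd₂.1.1⟩⟩

/-- Underlying edges give moral edges. -/
lemma mg_underlying {x y : V} (h : (G0 H A B C).Adj x y)
    (hx : x ∈ WG H A B C S) (hy : y ∈ WG H A B C S) : (MGg H A B C S).Adj x y :=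
  (moralG_adj _ x y).2 ⟨g0_ne h, Or.inl ⟨h, hx, hy⟩⟩

lemma md_underlying {x y : V} (h : (DD H A B C).Adj x y)
    (hx : x ∈ WD H A B C S) (hy : y ∈ WD H A B C S) : (MDd H A B C S).Adj x y := by
  refine (moralG_adj _ x y).2 ⟨?_, Or.inl ⟨h, hx, hy⟩⟩
  rintro rfl
  exact lt_irrefl _ h.2

lemma mg_moral (hH : IsChainGraph H) {x y w : V} (hx : isPa H x w) (hy : isPa H y w)
    (hw : w ∈ WG H A B C S) (hne : x ≠ y)
    (hxW : x ∈ WG H A B C S) (hyW : y ∈ WG H A B C S) : (MGg H A B C S).Adj x y := by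
  refine (moralG_adj _ x y).2 ⟨hne, Or.inr (Or.inr
    ⟨chainComp (inducedM (G0 H A B C) (WG H A B C S)) w, mem_chainComps.2 ⟨w, rfl⟩, ?_, ?_⟩)⟩
  · rw [ind_comp_g0 hH hw, mem_paSet]
    obtain ⟨hns, k, hk, hd⟩ := hx
    have hkW : k ∈ WG H A B C S := sc_WG hk hw
    refine ⟨?_, k, mem_chainComp_iff_sc.2 hk, ?_⟩
    · rw [mem_chainComp_iff_sc]; exact fun hc => hns hc
    · have hd0 : (G0 H A B C).DirEdge x k := H_dir_g0 hH hd
      exact ⟨⟨hd0.1, hxW, hkW⟩, fun hc => hd0.2 hc.1⟩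
  · rw [ind_comp_g0 hH hw, mem_paSet]
    obtain ⟨hns, k, hk, hd⟩ := hy
    have hkW : k ∈ WG H A B C S := sc_WG hk hw
    refine ⟨?_, k, mem_chainComp_iff_sc.2 hk, ?_⟩
    · rw [mem_chainComp_iff_sc]; exact fun hc => hns hc
    · have hd0 : (G0 H A B C).DirEdge y k := H_dir_g0 hH hd
      exact ⟨⟨hd0.1, hyW, hkW⟩, fun hc => hd0.2 hc.1⟩

lemma md_moral {x y w : V} (hx : (DD H A B C).Adj x w) (hy : (DD H A B C).Adj y w)
    (hw : w ∈ WD H A B C S) (hne : x ≠ y)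
    (hxW : x ∈ WD H A B C S) (hyW : y ∈ WD H A B C S) : (MDd H A B C S).Adj x y := by
  refine (moralG_adj _ x y).2 ⟨hne, Or.inr (Or.inr
    ⟨chainComp (inducedM (DD H A B C) (WD H A B C S)) w, mem_chainComps.2 ⟨w, rfl⟩, ?_, ?_⟩)⟩
  · rw [dd_comp_singleton, mem_paSet]
    refine ⟨?_, w, Finset.mem_singleton_self w, ⟨⟨hx, hxW, hw⟩, ?_⟩⟩
    · rw [Finset.mem_singleton]
      rintro rfl; exact lt_irrefl _ hx.2
    · rintro ⟨hc, -⟩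
      exact absurd hc.2 (not_lt.2 (le_of_lt hx.2))
  · rw [dd_comp_singleton, mem_paSet]
    refine ⟨?_, w, Finset.mem_singleton_self w, ⟨⟨hy, hyW, hw⟩, ?_⟩⟩
    · rw [Finset.mem_singleton]
      rintro rfl; exact lt_irrefl _ hy.2
    · rintro ⟨hc, -⟩
      exact absurd hc.2 (not_lt.2 (le_of_lt hy.2))

end TripleLemmas
section Boundary

variable {H : MixedGraph V} {A B C : Finset V} {S : Finset V}

/-- Between component-mates, a `G₀`-edge is necessarily undirected. -/
lemma sc_edge_undir (hH : IsChainGraph H) {a b : V} (hsc : SC H a b)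
    (h : (G0 H A B C).Adj a b ∨ (G0 H A B C).Adj b a) : (G0 H A B C).UndirEdge a b := by
  rcases h with h | h
  · by_cases h2 : (G0 H A B C).Adj b a
    · exact ⟨h, h2⟩
    · exact absurd hsc (g0_dir_isPa hH ⟨h, h2⟩).1
  · by_cases h2 : (G0 H A B C).Adj a b
    · exact ⟨h2, h⟩
    · exact absurd hsc.symm (g0_dir_isPa hH ⟨h, h2⟩).1

lemma undir_prop_X (hH : IsChainGraph H) {b x : V} (h : (G0 H A B C).UndirEdge b x)
    (hb : pX H A B C b) (hxC : x ∉ C) : pX H A B C x := by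
  have hsc : SC H b x := g0_undir_sc hH h
  have hxT : x ∈ TT H A B C := sc_TT hsc.symm (pX_TT' hb)
  rcases g0_skel_X (Or.inl h.1) hb hxT with h1 | h1
  · exact h1
  · exact absurd h1 hxC

lemma undir_prop_Y (hH : IsChainGraph H) {b x : V} (h : (G0 H A B C).UndirEdge b x)
    (hb : pY H A B C b) (hxC : x ∉ C) : pY H A B C x := by
  have hsc : SC H b x := g0_undir_sc hH h
  have hxT : x ∈ TT H A B C := sc_TT hsc.symm hb.1
  rcases g0_skel_Y (Or.inl h.1) hb hxT with h1 | h1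
  · exact h1
  · exact absurd h1 hxC

/-- A `C`-vertex whose component meets `WD` outside `C` is itself in `WD`. -/
lemma cmem_WD {g z : V} (hsc : SC H g z) (hg : g ∈ C) (hz : z ∈ WD H A B C S)
    (hzC : z ∉ C) : g ∈ WD H A B C S := by
  have hgT : g ∈ TT H A B C := C_sub_TT hg
  have hzT : z ∈ TT H A B C := sc_TT hsc.symm hgT
  have hne : g ≠ z := fun he => hzC (he ▸ hg)
  have hok : sOKu H A B C g z := by
    rcases side_tri hzT with h1 | h1 | h1
    · exact absurd h1 hzC
    · exact Or.inr (Or.inl ⟨Or.inr hg, Or.inl h1⟩)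
    · exact Or.inr (Or.inr ⟨Or.inr hg, Or.inl h1⟩)
  have hadj : (G0 H A B C).Adj g z := Or.inr (Or.inl ⟨hne, hsc, hok⟩)
  have hkey : key H A B C g < key H A B C z := by
    refine key_lt_of_side (hgt_sc hsc) ?_
    have h0 : sideR H A B C g = 0 := sideR_eq_zero.2 hg
    have h1 : sideR H A B C z ≠ 0 := fun hc => hzC (sideR_eq_zero.1 hc)
    omega
  exact dd_adj_WD ⟨Or.inl hadj, hkey⟩ hz

/-- From a directed `G₀`-edge into an `X`-side vertex, the source is in `X ∪ C`. -/
lemma dir_side_X (hH : IsChainGraph H) {u x : V} (hd : (G0 H A B C).DirEdge u x)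
    (hx : pX H A B C x) : pXC H A B C u := by
  rcases (g0_dir_iff hH).1 hd with h | ⟨hpa, hok⟩
  · have hxT : x ∈ TT H A B C := pX_TT' hx
    exact H_edge_side (Or.inr h.1) hxT (TT_anc h.1 hxT) hx
  · rcases hok with h1 | h1 | h1 | h1
    · exact absurd (pX_TT' hx) h1
    · exact absurd h1 hx.1
    · exact h1.2
    · exact absurd hx h1.1.2.2

lemma dir_side_Y (hH : IsChainGraph H) {u x : V} (hd : (G0 H A B C).DirEdge u x)
    (hx : pY H A B C x) : pYC H A B C u := by
  rcases (g0_dir_iff hH).1 hd with h | ⟨hpa, hok⟩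
  · have hxT : x ∈ TT H A B C := hx.1
    exact H_edge_side_Y (Or.inr h.1) hxT (TT_anc h.1 hxT) hx
  · rcases hok with h1 | h1 | h1 | h1
    · exact absurd hx.1 h1
    · exact absurd h1 hx.2.1
    · exact absurd h1.1 hx.2.2
    · exact h1.2

/-- Structure of a moral edge from a `WD`-vertex to a non-`WD`-vertex. -/
lemma mg_boundary (hH : IsChainGraph H) {u x : V} (h : (MGg H A B C S).Adj u x)
    (hu : u ∈ WD H A B C S) (hx : x ∉ WD H A B C S) :
    x ∈ WG H A B C S ∧
      ((SC H u x ∧ (G0 H A B C).UndirEdge u x) ∨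
        ((G0 H A B C).DirEdge u x ∧ isPa H u x)) := by
  obtain ⟨hne, huWG, hxWG, hcase⟩ := mg_cases hH h
  refine ⟨hxWG, ?_⟩
  rcases hcase with (h1 | h1) | ⟨w, hw, hp1, hp2⟩
  · by_cases h2 : (G0 H A B C).Adj x u
    · have hund : (G0 H A B C).UndirEdge u x := ⟨h1, h2⟩
      exact Or.inl ⟨g0_undir_sc hH hund, hund⟩
    · exact Or.inr ⟨⟨h1, h2⟩, g0_dir_isPa hH ⟨h1, h2⟩⟩
  · by_cases h2 : (G0 H A B C).Adj u x
    · have hund : (G0 H A B C).UndirEdge u x := ⟨h2, h1⟩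
      exact Or.inl ⟨g0_undir_sc hH hund, hund⟩
    · exact absurd (pa_WD hH (g0_dir_isPa hH ⟨h1, h2⟩) huWG) hx
  · exact absurd (pa_WD hH hp2 hw) hx

/-- An `MGg`-edge between two non-`WD` vertices is an undirected within-component edge. -/
lemma mg_both_out (hH : IsChainGraph H) {a b : V} (h : (MGg H A B C S).Adj a b)
    (ha : a ∉ WD H A B C S) (hb : b ∉ WD H A B C S) :
    (G0 H A B C).UndirEdge a b ∧ SC H a b := by
  obtain ⟨hne, haWG, hbWG, hcase⟩ := mg_cases hH h
  rcases hcase with (h1 | h1) | ⟨w, hw, hp1, hp2⟩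
  · by_cases h2 : (G0 H A B C).Adj b a
    · exact ⟨⟨h1, h2⟩, g0_undir_sc hH ⟨h1, h2⟩⟩
    · exact absurd (pa_WD hH (g0_dir_isPa hH ⟨h1, h2⟩) hbWG) ha
  · by_cases h2 : (G0 H A B C).Adj a b
    · exact ⟨⟨h2, h1⟩, g0_undir_sc hH ⟨h2, h1⟩⟩
    · exact absurd (pa_WD hH (g0_dir_isPa hH ⟨h1, h2⟩) haWG) hb
  · exact absurd (pa_WD hH hp1 hw) ha

/-- Connectivity within the non-`WD` part of the moral graph. -/
def RCn (H : MixedGraph V) (A B C S : Finset V) (x y : V) : Prop :=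
  Relation.ReflTransGen
    (fun a b => (MGg H A B C S).Adj a b ∧ a ∉ WD H A B C S ∧ b ∉ WD H A B C S) x y

lemma rc_sc (hH : IsChainGraph H) {x y : V} (h : RCn H A B C S x y) : SC H x y := by
  induction h with
  | refl => exact SimpleGraph.Reachable.refl _
  | tail _ hlast ih => exact ih.trans (mg_both_out hH hlast.1 hlast.2.1 hlast.2.2).2

lemma rc_symm {x y : V} (h : RCn H A B C S x y) : RCn H A B C S y x := by
  induction h with
  | refl => exact Relation.ReflTransGen.refl
  | tail _ hlast ih =>
    exact Relation.ReflTransGen.head ⟨hlast.1.symm, hlast.2.2, hlast.2.1⟩ ih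

lemma rc_X (hH : IsChainGraph H) {x y : V} (h : RCn H A B C S x y) (hx : pX H A B C x)
    (hCW : ∀ w, SC H w x → w ∈ C → w ∈ WD H A B C S) : pX H A B C y := by
  have main : ∀ z, RCn H A B C S x z → pX H A B C z ∧ SC H x z := by
    intro z hz
    induction hz with
    | refl => exact ⟨hx, SimpleGraph.Reachable.refl x⟩
    | tail hs hlast ih =>
      rename_i b c
      obtain ⟨hxb, hscb⟩ := ih
      have hund := mg_both_out hH hlast.1 hlast.2.1 hlast.2.2
      have hscc : SC H x c := hscb.trans hund.2
      have hcC : c ∉ C := fun hc => hlast.2.2 (hCW c hscc.symm hc)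
      exact ⟨undir_prop_X hH hund.1 hxb hcC, hscc⟩
  exact (main y h).1

lemma rc_Y (hH : IsChainGraph H) {x y : V} (h : RCn H A B C S x y) (hx : pY H A B C x)
    (hCW : ∀ w, SC H w x → w ∈ C → w ∈ WD H A B C S) : pY H A B C y := by
  have main : ∀ z, RCn H A B C S x z → pY H A B C z ∧ SC H x z := by
    intro z hz
    induction hz with
    | refl => exact ⟨hx, SimpleGraph.Reachable.refl x⟩
    | tail hs hlast ih =>
      rename_i b c
      obtain ⟨hxb, hscb⟩ := ih
      have hund := mg_both_out hH hlast.1 hlast.2.1 hlast.2.2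
      have hscc : SC H x c := hscb.trans hund.2
      have hcC : c ∉ C := fun hc => hlast.2.2 (hCW c hscc.symm hc)
      exact ⟨undir_prop_Y hH hund.1 hxb hcC, hscc⟩
  exact (main y h).1

end Boundary
section BoundaryMain

variable {H : MixedGraph V} {A B C : Finset V} {S : Finset V}

lemma boundary (hH : IsChainGraph H) {u z x p' : V}
    (hu : u ∈ WD H A B C S) (hz : z ∈ WD H A B C S)
    (hux : (MGg H A B C S).Adj u x) (hxWD : x ∉ WD H A B C S)
    (hpz : (MGg H A B C S).Adj p' z) (hpWD : p' ∉ WD H A B C S)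
    (hrc : RCn H A B C S x p') :
    u = z ∨ (MDd H A B C S).Adj u z := by
  by_cases he : u = z
  · exact Or.inl he
  right
  have hscxp : SC H x p' := rc_sc hH hrc
  obtain ⟨hxWG, hut⟩ := mg_boundary hH hux hu hxWD
  obtain ⟨hpWG, hzt⟩ := mg_boundary hH hpz.symm hz hpWD
  rcases hut with ⟨hscux, hundux⟩ | ⟨hdirux, hpaux⟩
  · rcases hzt with ⟨hsczp, hundzp⟩ | ⟨hdirzp, hpazp⟩
    · -- (KK) both in the component
      have hscuz : SC H u z := hscux.trans (hscxp.trans hsczp.symm)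
      have hok : sOKu H A B C u z := by
        by_cases huT : u ∈ TT H A B C
        · have hzT : z ∈ TT H A B C := sc_TT hscuz.symm huT
          rcases side_tri huT with hu1 | hu1 | hu1 <;>
            rcases side_tri hzT with hz1 | hz1 | hz1
          · exact Or.inr (Or.inl ⟨Or.inr hu1, Or.inr hz1⟩)
          · exact Or.inr (Or.inl ⟨Or.inr hu1, Or.inl hz1⟩)
          · exact Or.inr (Or.inr ⟨Or.inr hu1, Or.inl hz1⟩)
          · exact Or.inr (Or.inl ⟨Or.inl hu1, Or.inr hz1⟩)
          · exact Or.inr (Or.inl ⟨Or.inl hu1, Or.inl hz1⟩)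
          · -- pX u, pY z : contradiction
            exfalso
            have hCW : ∀ w, SC H w u → w ∈ C → w ∈ WD H A B C S :=
              fun w hw hwC => cmem_WD hw hwC hu hu1.1
            have hxC : x ∉ C := fun hc => hxWD (hCW x hscux.symm hc)
            have hpxx : pX H A B C x := undir_prop_X hH hundux hu1 hxC
            have hpC : p' ∉ C := fun hc =>
              hpWD (cmem_WD hsczp.symm hc hz hz1.2.1)
            have hpyp : pY H A B C p' := undir_prop_Y hH hundzp hz1 hpC
            have hpxp : pX H A B C p' :=
              rc_X hH hrc hpxx (fun w hw hwC => hCW w (hw.trans hscux.symm) hwC)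
            exact hpyp.2.2 hpxp
          · exact Or.inr (Or.inr ⟨Or.inl hu1, Or.inr hz1⟩)
          · -- pY u, pX z : contradiction
            exfalso
            have hCW : ∀ w, SC H w z → w ∈ C → w ∈ WD H A B C S :=
              fun w hw hwC => cmem_WD hw hwC hz hz1.1
            have hpC : p' ∉ C := fun hc => hpWD (hCW p' hsczp.symm hc)
            have hpxp : pX H A B C p' := undir_prop_X hH hundzp hz1 hpC
            have hxC : x ∉ C := fun hc =>
              hxWD (cmem_WD hscux.symm hc hu hu1.2.1)
            have hpyx : pY H A B C x := undir_prop_Y hH hundux hu1 hxC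
            have hpyp : pY H A B C p' :=
              rc_Y hH hrc hpyx
                (fun w hw hwC => hCW w (hw.trans (hscxp.trans hsczp.symm)) hwC)
            exact hpyp.2.2 hpxp
          · exact Or.inr (Or.inr ⟨Or.inl hu1, Or.inl hz1⟩)
        · refine Or.inl ⟨huT, fun hc => huT (sc_TT hscuz hc)⟩
      have hadj : (G0 H A B C).Adj u z := Or.inr (Or.inl ⟨he, hscuz, hok⟩)
      rcases dd_skel (Or.inl hadj) with h | h
      · exact md_underlying h hu hz
      · exact (md_underlying h hz hu).symm
    · -- (KP) u in component, z a parent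
      have hpazx : isPa H z x := isPa_sc hpazp hscxp.symm
      have hpazu : isPa H z u := isPa_sc hpazx hscux.symm
      have hok : sOKd H A B C z u := by
        by_cases huT : u ∈ TT H A B C
        · rcases side_tri huT with hu1 | hu1 | hu1
          · exact Or.inr (Or.inl hu1)
          · -- pX u
            have hCW : ∀ w, SC H w u → w ∈ C → w ∈ WD H A B C S :=
              fun w hw hwC => cmem_WD hw hwC hu hu1.1
            have hxC : x ∉ C := fun hc => hxWD (hCW x hscux.symm hc)
            have hpxx : pX H A B C x := undir_prop_X hH hundux hu1 hxC
            have hpxp : pX H A B C p' :=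
              rc_X hH hrc hpxx (fun w hw hwC => hCW w (hw.trans hscux.symm) hwC)
            exact Or.inr (Or.inr (Or.inl ⟨hu1, dir_side_X hH hdirzp hpxp⟩))
          · -- pY u
            have hCW : ∀ w, SC H w u → w ∈ C → w ∈ WD H A B C S :=
              fun w hw hwC => cmem_WD hw hwC hu hu1.2.1
            have hxC : x ∉ C := fun hc => hxWD (hCW x hscux.symm hc)
            have hpyx : pY H A B C x := undir_prop_Y hH hundux hu1 hxC
            have hpyp : pY H A B C p' :=
              rc_Y hH hrc hpyx (fun w hw hwC => hCW w (hw.trans hscux.symm) hwC)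
            exact Or.inr (Or.inr (Or.inr ⟨hu1, dir_side_Y hH hdirzp hpyp⟩))
        · exact Or.inl huT
      have hadj : (G0 H A B C).Adj z u := Or.inr (Or.inr ⟨hpazu, hok⟩)
      have hdd : (DD H A B C).Adj z u :=
        ⟨Or.inl hadj, key_lt_of_hgt (hgt_isPa hH hpazu)⟩
      exact (md_underlying hdd hz hu).symm
  · rcases hzt with ⟨hsczp, hundzp⟩ | ⟨hdirzp, hpazp⟩
    · -- (PK) u a parent, z in component
      have hsczx : SC H z x := hsczp.trans hscxp.symm
      have hpauz : isPa H u z := isPa_sc hpaux hsczx.symm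
      have hok : sOKd H A B C u z := by
        by_cases hzT : z ∈ TT H A B C
        · rcases side_tri hzT with hz1 | hz1 | hz1
          · exact Or.inr (Or.inl hz1)
          · -- pX z
            have hCW : ∀ w, SC H w z → w ∈ C → w ∈ WD H A B C S :=
              fun w hw hwC => cmem_WD hw hwC hz hz1.1
            have hpC : p' ∉ C := fun hc => hpWD (hCW p' hsczp.symm hc)
            have hpxp : pX H A B C p' := undir_prop_X hH hundzp hz1 hpC
            have hpxx : pX H A B C x :=
              rc_X hH (rc_symm hrc) hpxp
                (fun w hw hwC => hCW w (hw.trans hsczp.symm) hwC)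
            exact Or.inr (Or.inr (Or.inl ⟨hz1, dir_side_X hH hdirux hpxx⟩))
          · -- pY z
            have hCW : ∀ w, SC H w z → w ∈ C → w ∈ WD H A B C S :=
              fun w hw hwC => cmem_WD hw hwC hz hz1.2.1
            have hpC : p' ∉ C := fun hc => hpWD (hCW p' hsczp.symm hc)
            have hpyp : pY H A B C p' := undir_prop_Y hH hundzp hz1 hpC
            have hpyx : pY H A B C x :=
              rc_Y hH (rc_symm hrc) hpyp
                (fun w hw hwC => hCW w (hw.trans hsczp.symm) hwC)
            exact Or.inr (Or.inr (Or.inr ⟨hz1, dir_side_Y hH hdirux hpyx⟩))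
        · exact Or.inl hzT
      have hadj : (G0 H A B C).Adj u z := Or.inr (Or.inr ⟨hpauz, hok⟩)
      have hdd : (DD H A B C).Adj u z :=
        ⟨Or.inl hadj, key_lt_of_hgt (hgt_isPa hH hpauz)⟩
      exact md_underlying hdd hu hz
    · -- (PP) both parents
      have hpazx : isPa H z x := isPa_sc hpazp hscxp.symm
      exact md_moral (pa_dd_mfin hH hpaux) (pa_dd_mfin hH hpazx)
        (mfin_WD hH hxWG) he hu hz

end BoundaryMain
section Walks

variable {H : MixedGraph V} {A B C : Finset V} {S : Finset V}

lemma dpar_C_aux {x w : V} (hsc : SC H x w) (hk : key H A B C x < key H A B C w)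
    (hw : w ∈ C) : x ∈ C := by
  have h1 := side_le_of_key_le (hgt_sc hsc) (le_of_lt hk)
  have h2 : sideR H A B C w = 0 := sideR_eq_zero.2 hw
  rw [← sideR_eq_zero (H := H) (A := A) (B := B)]
  omega

lemma isPa_TT {p w : V} (hp : isPa H p w) (hw : w ∈ TT H A B C) : p ∈ TT H A B C := by
  obtain ⟨-, k, hk, hd⟩ := hp
  exact TT_anc hd.1 (sc_TT hk hw)

/-- Transfer of moral edges from `MDd` to `MGg` (easy direction). -/
lemma md_to_mg (hH : IsChainGraph H) {x y : V} (h : (MDd H A B C S).Adj x y) :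
    (MGg H A B C S).Adj x y := by
  obtain ⟨hne, hxWD, hyWD, hcase⟩ := md_cases h
  have hxWG := WD_sub_WG hH hxWD
  have hyWG := WD_sub_WG hH hyWD
  rcases hcase with (h1 | h1) | ⟨w, hwWD, hx1, hy1⟩
  · exact mg_underlying (dd_adj_g0 hH h1) hxWG hyWG
  · exact (mg_underlying (dd_adj_g0 hH h1) hyWG hxWG).symm
  · -- common DD-child w : case on parent types
    have hwWG := WD_sub_WG hH hwWD
    have tx := dd_adj_g0 hH hx1
    have ty := dd_adj_g0 hH hy1
    by_cases hux : (G0 H A B C).Adj w x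
    · -- x—w undirected, x in the component of w
      have hundx : (G0 H A B C).UndirEdge x w := ⟨tx, hux⟩
      have hscxw : SC H x w := g0_undir_sc hH hundx
      by_cases huy : (G0 H A B C).Adj w y
      · -- both undirected : fill edge between x and y
        have hundy : (G0 H A B C).UndirEdge y w := ⟨ty, huy⟩
        have hscyw : SC H y w := g0_undir_sc hH hundy
        have hscxy : SC H x y := hscxw.trans hscyw.symm
        have hok : sOKu H A B C x y := by
          by_cases hwT : w ∈ TT H A B C
          · have hxT : x ∈ TT H A B C := sc_TT hscxw hwT
            have hyT : y ∈ TT H A B C := sc_TT hscyw hwT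
            rcases side_tri hxT with hx2 | hx2 | hx2 <;>
              rcases side_tri hyT with hy2 | hy2 | hy2
            · exact Or.inr (Or.inl ⟨Or.inr hx2, Or.inr hy2⟩)
            · exact Or.inr (Or.inl ⟨Or.inr hx2, Or.inl hy2⟩)
            · exact Or.inr (Or.inr ⟨Or.inr hx2, Or.inl hy2⟩)
            · exact Or.inr (Or.inl ⟨Or.inl hx2, Or.inr hy2⟩)
            · exact Or.inr (Or.inl ⟨Or.inl hx2, Or.inl hy2⟩)
            · -- pX x, pY y : contradiction via w
              exfalso
              rcases g0_skel_X (Or.inl hundx.1) hx2 hwT with hw2 | hw2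
              · rcases g0_skel_Y (Or.inl hundy.1) hy2 hwT with hw3 | hw3
                · exact hw3.2.2 hw2
                · exact hw2.1 hw3
              · exact hx2.1 (dpar_C_aux hscxw hx1.2 hw2)
            · exact Or.inr (Or.inr ⟨Or.inl hx2, Or.inr hy2⟩)
            · -- pY x, pX y : contradiction via w
              exfalso
              rcases g0_skel_X (Or.inl hundy.1) hy2 hwT with hw2 | hw2
              · rcases g0_skel_Y (Or.inl hundx.1) hx2 hwT with hw3 | hw3
                · exact hw3.2.2 hw2
                · exact hw2.1 hw3
              · exact hy2.1 (dpar_C_aux hscyw hy1.2 hw2)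
            · exact Or.inr (Or.inr ⟨Or.inl hx2, Or.inl hy2⟩)
          · exact Or.inl ⟨fun hc => hwT (sc_TT hscxw.symm hc),
              fun hc => hwT (sc_TT hscyw.symm hc)⟩
        exact mg_underlying (Or.inr (Or.inl ⟨hne, hscxy, hok⟩)) hxWG hyWG
      · -- x—w undirected, y→w directed
        have hdy : (G0 H A B C).DirEdge y w := ⟨ty, huy⟩
        have hpay : isPa H y w := g0_dir_isPa hH hdy
        have hpayx : isPa H y x := isPa_sc hpay hscxw.symm
        have hok : sOKd H A B C y x := by
          by_cases hxT : x ∈ TT H A B C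
          · rcases side_tri hxT with hx2 | hx2 | hx2
            · exact Or.inr (Or.inl hx2)
            · -- pX x
              have hwT : w ∈ TT H A B C := sc_TT hscxw.symm hxT
              have hpxw : pX H A B C w := by
                rcases g0_skel_X (Or.inl hundx.1) hx2 hwT with hw2 | hw2
                · exact hw2
                · exact absurd (dpar_C_aux hscxw hx1.2 hw2) hx2.1
              have hyT : y ∈ TT H A B C := isPa_TT hpay hwT
              exact Or.inr (Or.inr (Or.inl
                ⟨hx2, g0_skel_X (Or.inr ty) hpxw hyT⟩))
            · -- pY x
              have hwT : w ∈ TT H A B C := sc_TT hscxw.symm hxT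
              have hpyw : pY H A B C w := by
                rcases g0_skel_Y (Or.inl hundx.1) hx2 hwT with hw2 | hw2
                · exact hw2
                · exact absurd (dpar_C_aux hscxw hx1.2 hw2) hx2.2.1
              have hyT : y ∈ TT H A B C := isPa_TT hpay hwT
              exact Or.inr (Or.inr (Or.inr
                ⟨hx2, g0_skel_Y (Or.inr ty) hpyw hyT⟩))
          · exact Or.inl hxT
        exact (mg_underlying (Or.inr (Or.inr ⟨hpayx, hok⟩)) hyWG hxWG).symm
    · -- x→w directed
      have hdx : (G0 H A B C).DirEdge x w := ⟨tx, hux⟩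
      have hpax : isPa H x w := g0_dir_isPa hH hdx
      by_cases huy : (G0 H A B C).Adj w y
      · -- y—w undirected, x→w directed : symmetric to previous case
        have hundy : (G0 H A B C).UndirEdge y w := ⟨ty, huy⟩
        have hscyw : SC H y w := g0_undir_sc hH hundy
        have hpaxy : isPa H x y := isPa_sc hpax hscyw.symm
        have hok : sOKd H A B C x y := by
          by_cases hyT : y ∈ TT H A B C
          · rcases side_tri hyT with hy2 | hy2 | hy2
            · exact Or.inr (Or.inl hy2)
            · have hwT : w ∈ TT H A B C := sc_TT hscyw.symm hyT
              have hpxw : pX H A B C w := by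
                rcases g0_skel_X (Or.inl hundy.1) hy2 hwT with hw2 | hw2
                · exact hw2
                · exact absurd (dpar_C_aux hscyw hy1.2 hw2) hy2.1
              have hxT : x ∈ TT H A B C := isPa_TT hpax hwT
              exact Or.inr (Or.inr (Or.inl
                ⟨hy2, g0_skel_X (Or.inr tx) hpxw hxT⟩))
            · have hwT : w ∈ TT H A B C := sc_TT hscyw.symm hyT
              have hpyw : pY H A B C w := by
                rcases g0_skel_Y (Or.inl hundy.1) hy2 hwT with hw2 | hw2
                · exact hw2
                · exact absurd (dpar_C_aux hscyw hy1.2 hw2) hy2.2.1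
              have hxT : x ∈ TT H A B C := isPa_TT hpax hwT
              exact Or.inr (Or.inr (Or.inr
                ⟨hy2, g0_skel_Y (Or.inr tx) hpyw hxT⟩))
          · exact Or.inl hyT
        exact mg_underlying (Or.inr (Or.inr ⟨hpaxy, hok⟩)) hxWG hyWG
      · -- both directed : moral edge
        have hdy : (G0 H A B C).DirEdge y w := ⟨ty, huy⟩
        exact mg_moral hH hpax (g0_dir_isPa hH hdy) hwWG hne hxWG hyWG

/-- Transfer of moral edges from `MGg` to `MDd` when both ends are in `WD`. -/
lemma mg_to_md (hH : IsChainGraph H) {x y : V} (h : (MGg H A B C S).Adj x y)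
    (hx : x ∈ WD H A B C S) (hy : y ∈ WD H A B C S) : (MDd H A B C S).Adj x y := by
  obtain ⟨hne, hxWG, hyWG, hcase⟩ := mg_cases hH h
  rcases hcase with (h1 | h1) | ⟨w, hw, hp1, hp2⟩
  · rcases dd_skel (Or.inl h1) with h2 | h2
    · exact md_underlying h2 hx hy
    · exact (md_underlying h2 hy hx).symm
  · rcases dd_skel (Or.inr h1) with h2 | h2
    · exact md_underlying h2 hx hy
    · exact (md_underlying h2 hy hx).symm
  · exact md_moral (pa_dd_mfin hH hp1) (pa_dd_mfin hH hp2) (mfin_WD hH hw) hne hx hy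

end Walks
section WalkSurgery

variable {H : MixedGraph V} {A B C : Finset V} {S : Finset V}

lemma walk_map_md_mg (hH : IsChainGraph H) : ∀ {a b : V} (w : (MDd H A B C S).Walk a b),
    ∃ w' : (MGg H A B C S).Walk a b, w'.support = w.support := by
  intro a b w
  induction w with
  | nil => exact ⟨SimpleGraph.Walk.nil, rfl⟩
  | cons hadj p ih =>
    obtain ⟨w', hw'⟩ := ih
    exact ⟨SimpleGraph.Walk.cons (md_to_mg hH hadj) w', by
      rw [SimpleGraph.Walk.support_cons, SimpleGraph.Walk.support_cons, hw']⟩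

lemma aux_walk (hH : IsChainGraph H) : ∀ {v b : V} (w : (MGg H A B C S).Walk v b),
    v ∉ WD H A B C S → b ∈ WD H A B C S →
    ∃ p' z, ∃ w' : (MGg H A B C S).Walk z b,
      (MGg H A B C S).Adj p' z ∧ RCn H A B C S v p' ∧ p' ∉ WD H A B C S ∧
      z ∈ WD H A B C S ∧ w'.length < w.length ∧
      (∀ t ∈ w'.support, t ∈ w.support) := by
  intro v b w
  induction w with
  | nil => intro hv hb; exact absurd hb hv
  | cons hadj p ih =>
    rename_i v c b
    intro hv hb
    by_cases hc : c ∈ WD H A B C S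
    · refine ⟨v, c, p, hadj, Relation.ReflTransGen.refl, hv, hc, ?_, ?_⟩
      · rw [SimpleGraph.Walk.length_cons]; omega
      · intro t ht
        rw [SimpleGraph.Walk.support_cons]
        exact List.mem_cons_of_mem _ ht
    · obtain ⟨p', z, w', h1, h2, h3, h4, h5, h6⟩ := ih hc hb
      refine ⟨p', z, w', h1, Relation.ReflTransGen.head ⟨hadj, hv, hc⟩ h2, h3, h4, ?_, ?_⟩
      · rw [SimpleGraph.Walk.length_cons]; omega
      · intro t ht
        rw [SimpleGraph.Walk.support_cons]
        exact List.mem_cons_of_mem _ (h6 t ht)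

lemma main_walk (hH : IsChainGraph H) : ∀ (n : ℕ) {u b : V} (w : (MGg H A B C S).Walk u b),
    w.length ≤ n → u ∈ WD H A B C S → b ∈ WD H A B C S →
    ∃ w' : (MDd H A B C S).Walk u b, ∀ t ∈ w'.support, t ∈ w.support := by
  intro n
  induction n with
  | zero =>
    intro u b w hl hu hb
    cases w with
    | nil => exact ⟨SimpleGraph.Walk.nil, by simp⟩
    | cons h p => rw [SimpleGraph.Walk.length_cons] at hl; omega
  | succ n ih =>
    intro u b w hl hu hb
    cases w with
    | nil => exact ⟨SimpleGraph.Walk.nil, by simp⟩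
    | cons hadj p =>
      rename_i c
      rw [SimpleGraph.Walk.length_cons] at hl
      by_cases hc : c ∈ WD H A B C S
      · obtain ⟨w', hw'⟩ := ih p (by omega) hc hb
        refine ⟨SimpleGraph.Walk.cons (mg_to_md hH hadj hu hc) w', ?_⟩
        intro t ht
        rw [SimpleGraph.Walk.support_cons] at ht ⊢
        rcases List.mem_cons.1 ht with rfl | ht
        · exact List.mem_cons_self
        · exact List.mem_cons_of_mem _ (hw' t ht)
      · obtain ⟨p', z, w', h1, h2, h3, h4, h5, h6⟩ := aux_walk hH p hc hb
        have hlen : w'.length ≤ n := by omega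
        rcases boundary hH hu h4 hadj hc h1 h3 h2 with he | hedge
        · subst he
          obtain ⟨w'', hw''⟩ := ih w' hlen hu hb
          refine ⟨w'', fun t ht => ?_⟩
          rw [SimpleGraph.Walk.support_cons]
          exact List.mem_cons_of_mem _ (h6 t (hw'' t ht))
        · obtain ⟨w'', hw''⟩ := ih w' hlen h4 hb
          refine ⟨SimpleGraph.Walk.cons hedge w'', fun t ht => ?_⟩
          rw [SimpleGraph.Walk.support_cons] at ht ⊢
          rcases List.mem_cons.1 ht with rfl | ht
          · exact List.mem_cons_self
          · exact List.mem_cons_of_mem _ (h6 t (hw'' t ht))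

end WalkSurgery

section Equivalence

variable {H : MixedGraph V} {A B C : Finset V}

lemma g0_dd_cgCI (hH : IsChainGraph H) (A' B' C' : Finset V) :
    cgCI (G0 H A B C) A' B' C' ↔ cgCI (DD H A B C) A' B' C' := by
  constructor
  · intro hsep
    show SeparatesIn (MDd H A B C (A' ∪ B' ∪ C')) Finset.univ A' B' C'
    intro a ha b hb w _
    obtain ⟨w', hw'⟩ := walk_map_md_mg (S := A' ∪ B' ∪ C') hH w
    have hsep' : SeparatesIn (MGg H A B C (A' ∪ B' ∪ C')) Finset.univ A' B' C' := hsep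
    obtain ⟨c, hc, hcs⟩ := hsep' a ha b hb w' (fun t _ => Finset.mem_univ t)
    exact ⟨c, hc, by rw [hw'] at hcs; exact hcs⟩
  · intro hsep
    show SeparatesIn (MGg H A B C (A' ∪ B' ∪ C')) Finset.univ A' B' C'
    intro a ha b hb w _
    have haWD : a ∈ WD H A B C (A' ∪ B' ∪ C') :=
      S_sub_WD (Finset.mem_union_left _ (Finset.mem_union_left _ ha))
    have hbWD : b ∈ WD H A B C (A' ∪ B' ∪ C') :=
      S_sub_WD (Finset.mem_union_left _ (Finset.mem_union_right _ hb))
    obtain ⟨w', hw'⟩ := main_walk hH w.length w le_rfl haWD hbWD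
    have hsep' : SeparatesIn (MDd H A B C (A' ∪ B' ∪ C')) Finset.univ A' B' C' := hsep
    obtain ⟨c, hc, hcs⟩ := hsep' a ha b hb w' (fun t _ => Finset.mem_univ t)
    exact ⟨c, hc, hw' c hcs⟩

lemma g0_tri (hH : IsChainGraph H) : IsCGTri H (G0 H A B C) :=
  ⟨g0_chain hH, fun _ _ h => H_undir_g0 hH h, fun _ _ h => H_dir_g0 hH h,
    DD H A B C, dd_dag, fun A' B' C' _ => g0_dd_cgCI hH A' B' C'⟩

end Equivalence

section Separation

variable {H : MixedGraph V} {A B C : Finset V}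

/-- Any chain graph whose edges embed type-respectingly into `G₀` separates `A` from `B` by
`C`. -/
lemma sub_cgCI (hH : IsChainGraph H) {G2 : MixedGraph V} (hch : IsChainGraph G2)
    (hU : ∀ a b, G2.UndirEdge a b → (G0 H A B C).UndirEdge a b)
    (hD : ∀ a b, G2.DirEdge a b → (G0 H A B C).DirEdge a b)
    (hABC : DisjointTriple A B C) (hsep : cgCI H A B C) :
    cgCI G2 A B C := by
  have hAdj : ∀ a b, G2.Adj a b → (G0 H A B C).Adj a b := by
    intro a b h
    by_cases h2 : G2.Adj b a
    · exact (hU a b ⟨h, h2⟩).1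
    · exact (hD a b ⟨h, h2⟩).1
  set W2 := anSet G2 (A ∪ B ∪ C) with hW2
  have hW2T : ∀ v, v ∈ W2 → v ∈ TT H A B C := by
    intro v hv
    obtain ⟨k, hk, hr⟩ := mem_anSet.1 hv
    refine mem_TT.2 ⟨k, hk, g0_reach_iff.1 (Relation.ReflTransGen.mono (fun a b (hab : G2.Adj a b) => hAdj a b hab) _ _ hr)⟩
  -- members of a component of the induced subgraph are SC-related
  have hsub_comp : ∀ (w u : V), u ∈ chainComp (inducedM G2 W2) w → SC H u w := by
    intro w u hu
    rw [mem_chainComp] at hu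
    rw [SimpleGraph.reachable_iff_reflTransGen] at hu
    have : ∀ t, Relation.ReflTransGen
        (fun a b => (inducedM G2 W2).Adj a b ∧ (inducedM G2 W2).Adj b a) w t →
        SC H t w := by
      intro t ht
      induction ht with
      | refl => exact SimpleGraph.Reachable.refl w
      | tail hs hlast ih =>
        exact ((g0_undir_sc hH (hU _ _ ⟨hlast.1.1, hlast.2.1⟩)).symm).trans ih
    exact this u hu
  -- key claim : moral edges starting on the X side stay in X ∪ C
  have hstep : ∀ x y, (moralG (inducedM G2 W2)).Adj x y → pX H A B C x →
      (y ∈ C ∨ pX H A B C y) := by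
    intro x y hxy hx
    obtain ⟨hne, hcase⟩ := (moralG_adj _ x y).1 hxy
    rcases hcase with h1 | h1 | ⟨K, hK, hxP, hyP⟩
    · rcases g0_skel_X (Or.inl (hAdj _ _ h1.1)) hx (hW2T _ h1.2.2) with h | h
      · exact Or.inr h
      · exact Or.inl h
    · rcases g0_skel_X (Or.inr (hAdj _ _ h1.1)) hx (hW2T _ h1.2.1) with h | h
      · exact Or.inr h
      · exact Or.inl h
    · obtain ⟨w, rfl⟩ := mem_chainComps.1 hK
      obtain ⟨hx1, k₁, hk₁, hd₁⟩ := mem_paSet.1 hxP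
      obtain ⟨hy1, k₂, hk₂, hd₂⟩ := mem_paSet.1 hyP
      have hdx : G2.DirEdge x k₁ :=
        ⟨hd₁.1.1, fun hc => hd₁.2 ⟨hc, hd₁.1.2.2, hd₁.1.2.1⟩⟩
      have hdy : G2.DirEdge y k₂ :=
        ⟨hd₂.1.1, fun hc => hd₂.2 ⟨hc, hd₂.1.2.2, hd₂.1.2.1⟩⟩
      obtain ⟨-, kx, hkx, hdkx⟩ := g0_dir_isPa hH (hD _ _ hdx)
      obtain ⟨-, ky, hky, hdky⟩ := g0_dir_isPa hH (hD _ _ hdy)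
      have hsck : SC H k₁ k₂ := (hsub_comp w k₁ hk₁).trans (hsub_comp w k₂ hk₂).symm
      have hsckxy : SC H kx ky := (hkx.trans hsck).trans hky.symm
      have hyT : y ∈ TT H A B C := hW2T _ hd₂.1.2.1
      rcases side_tri hyT with h | h | h
      · exact Or.inl h
      · exact Or.inr h
      · exfalso
        have hkxT : kx ∈ TT H A B C := sc_TT hkx (hW2T _ hd₁.1.2.2)
        exact pa_one_sided hH hsckxy hkxT hdkx hdky hx h
  -- walk argument
  show SeparatesIn (moralG (inducedM G2 W2)) Finset.univ A B C
  intro a ha b hb w _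
  by_contra hcon
  push_neg at hcon
  have hprop : ∀ (v t : V) (p : (moralG (inducedM G2 W2)).Walk v t),
      pX H A B C v → (∀ s ∈ p.support, s ∉ C) → pX H A B C t := by
    intro v t p
    induction p with
    | nil => exact fun h _ => h
    | cons hadj p ih =>
      intro hv hsup
      have hxsup := p.start_mem_support
      have hxC := hsup _ (by
        rw [SimpleGraph.Walk.support_cons]
        exact List.mem_cons_of_mem _ hxsup)
      rcases hstep _ _ hadj hv with h | h
      · exact absurd h hxC
      · exact ih h (fun s hs => hsup s (by
          rw [SimpleGraph.Walk.support_cons]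
          exact List.mem_cons_of_mem _ hs))
  have hbX : pX H A B C b :=
    hprop a b w (pA_pX ha hABC.2.1) (fun s hs hsC => hcon s hsC hs)
  exact pX_not_B hsep hb hbX

end Separation
section Final

variable {H : MixedGraph V} {A B C : Finset V}

/-- Any chain graph containing `H`'s undirected edges whose edges lie inside `G₀`
respects `G₀`'s edge types. -/
lemma sub_type_respecting (hH : IsChainGraph H) {G2 : MixedGraph V}
    (hch : IsChainGraph G2)
    (hcontain : ∀ a b, H.UndirEdge a b → G2.UndirEdge a b)
    (hsub : ∀ a b, G2.Adj a b → (G0 H A B C).Adj a b) :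
    (∀ a b, G2.UndirEdge a b → (G0 H A B C).UndirEdge a b) ∧
      (∀ a b, G2.DirEdge a b → (G0 H A B C).DirEdge a b) := by
  constructor
  · intro a b h
    exact ⟨hsub _ _ h.1, hsub _ _ h.2⟩
  · intro a b h
    refine ⟨hsub _ _ h.1, fun hba => ?_⟩
    have hund : (G0 H A B C).UndirEdge a b := ⟨hsub _ _ h.1, hba⟩
    have hsc : SC H a b := g0_undir_sc hH hund
    have hrtg : Relation.ReflTransGen G2.Adj b a :=
      Relation.ReflTransGen.mono (fun u v (huv : H.Adj u v ∧ H.Adj v u) => (hcontain u v ⟨huv.1, huv.2⟩).1) _ _ (sc_rtg hsc.symm)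
    exact hch a b h hrtg

end Final
end CG10
/-- For every chain graph `H` and every disjoint triplet
`(A,B,C) ∈ M_H`, there exists a minimal triangulation `H'` of `H` with
`(A,B,C) ∈ M_{H'}`. -/
theorem exists_cg_minimal_triangulation_separating
    {V : Type} [Fintype V] [DecidableEq V] (H : MixedGraph V)
    (hH : IsChainGraph H) (A B C : Finset V)
    (hABC : DisjointTriple A B C) (hsep : cgCI H A B C) :
    ∃ H' : MixedGraph V, IsCGMinTri H H' ∧ cgCI H' A B C := by
  classical
  set G0 := CG10.G0 H A B C with hG0
  have hG0tri : IsCGTri H G0 := CG10.g0_tri hH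
  -- edge-count of a mixed graph
  let ec : MixedGraph V → ℕ := fun G =>
    (Finset.univ.filter (fun p : V × V => G.Adj p.1 p.2)).card
  let P : ℕ → Prop := fun n => ∃ G : MixedGraph V, IsCGTri H G ∧
      (∀ a b, G.Adj a b → G0.Adj a b) ∧ ec G = n
  have hPex : ∃ n, P n := ⟨ec G0, G0, hG0tri, fun _ _ h => h, rfl⟩
  obtain ⟨G', hG'tri, hG'sub, hG'card⟩ := Nat.find_spec hPex
  refine ⟨G', ⟨hG'tri, ?_⟩, ?_⟩
  · -- minimality
    intro G'' hG''tri hcon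
    obtain ⟨hsubset, hne⟩ := hcon
    have hsub2 : ∀ a b, G''.Adj a b → G'.Adj a b := by
      intro a b h
      exact hsubset (show (a, b) ∈ mEdges G'' from h)
    have hsub0 : ∀ a b, G''.Adj a b → G0.Adj a b :=
      fun a b h => hG'sub a b (hsub2 a b h)
    have hssub : (Finset.univ.filter (fun p : V × V => G''.Adj p.1 p.2)) ⊂
        (Finset.univ.filter (fun p : V × V => G'.Adj p.1 p.2)) := by
      constructor
      · intro p hp
        simp only [Finset.mem_filter, Finset.mem_univ, true_and] at hp ⊢
        exact hsub2 p.1 p.2 hp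
      · intro hcon2
        apply hne
        intro p hp
        have : p ∈ Finset.univ.filter (fun p : V × V => G'.Adj p.1 p.2) := by
          simp only [Finset.mem_filter, Finset.mem_univ, true_and]
          exact hp
        have := hcon2 this
        simp only [Finset.mem_filter, Finset.mem_univ, true_and] at this
        exact this
    have hcard : ec G'' < ec G' := Finset.card_lt_card hssub
    rw [hG'card] at hcard
    exact Nat.find_min hPex hcard ⟨G'', hG''tri, hsub0, rfl⟩
  · -- separation
    obtain ⟨hU, hD⟩ :=
      CG10.sub_type_respecting hH hG'tri.1 hG'tri.2.1 hG'sub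
    exact CG10.sub_cgCI hH hG'tri.1 hU hD hABC hsep
end
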